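/- arXiv:2103.06792 — 13 statements merged into one kernel-verified Lean document; each statement's English description precedes it below -/
import Mathlib

section
/- Let H be a complex Hilbert space, let A be a (possibly unbounded) linear operator in H given as a linear partial map, and let ω ∈ ℝ and r > 0. Assume that for every z ∈ ℂ with Re z > ω there is a bounded linear operator R(z) : H → H with ‖R(z)‖ ≤ 1/r such that R(z) maps H into the domain of A, (z·R(z)x − A(R(z)x)) = x for every x ∈ H, and R(z)(z·y − A y) = y for every y in the domain of A. Then for every ω' with ω − r < ω' ≤ ω and every z ∈ ℂ with Re z > ω', there is a bounded linear operator R'(z) with the same two-sided inverse properties for z − A and with ‖R'(z)‖ ≤ 1/(r − (ω − ω')). -/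
/-- `R` is a bounded two-sided inverse of `z - A` for the (possibly unbounded)
operator `A` given as a linear partial map. -/
def IsTwoSidedResolvent {H : Type*} [NormedAddCommGroup H] [InnerProductSpace ℂ H]
    (A : H →ₗ.[ℂ] H) (z : ℂ) (R : H →L[ℂ] H) : Prop :=
  (∀ x : H, ∃ hx : R x ∈ A.domain, z • R x - A ⟨R x, hx⟩ = x) ∧
  (∀ y : A.domain, R (z • (y : H) - A y) = y)

theorem stmt_0 {H : Type*} [NormedAddCommGroup H] [InnerProductSpace ℂ H] [CompleteSpace H]
    (A : H →ₗ.[ℂ] H) (ω r : ℝ) (hr : 0 < r)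
    (hres : ∀ z : ℂ, ω < z.re →
      ∃ R : H →L[ℂ] H, ‖R‖ ≤ 1 / r ∧ IsTwoSidedResolvent A z R) :
    ∀ ω' : ℝ, ω - r < ω' → ω' ≤ ω → ∀ z : ℂ, ω' < z.re →
      ∃ R : H →L[ℂ] H, ‖R‖ ≤ 1 / (r - (ω - ω')) ∧ IsTwoSidedResolvent A z R := by
  intro ω' hω'r hω'ω z hz
  set a : ℝ := max (ω - z.re) 0 with ha
  set b : ℝ := ω - ω' with hb
  set s : ℝ := (a + b) / 2 with hs
  have hb0 : 0 ≤ b := by simp [hb]; linarith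
  have hab : a ≤ b := by
    apply max_le _ hb0
    linarith
  have hs0 : 0 ≤ s := by positivity
  have hsb : s ≤ b := by simp [hs]; linarith
  have hbr : b < r := by simp [hb]; linarith
  have hsr : s < r := lt_of_le_of_lt hsb hbr
  have hzs : ω < (z + (s : ℂ)).re := by
    simp only [Complex.add_re, Complex.ofReal_re]
    rcases le_or_gt z.re ω with h | h
    · have haz : a = ω - z.re := max_eq_left (by linarith)
      have : a < b := by rw [haz]; simp [hb]; linarith
      have : a < s := by simp [hs]; linarith
      linarith [haz ▸ this]
    · linarith
  obtain ⟨R₀, hR₀norm, hfwd, hbwd⟩ := hres (z + (s : ℂ)) hzs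
  have hR₀0 : 0 ≤ ‖R₀‖ := norm_nonneg _
  set t : H →L[ℂ] H := (s : ℂ) • R₀ with htdef
  have ht : ‖t‖ < 1 := by
    rw [htdef, norm_smul, Complex.norm_real, Real.norm_eq_abs, abs_of_nonneg hs0]
    calc s * ‖R₀‖ ≤ s * (1 / r) := by
          apply mul_le_mul_of_nonneg_left hR₀norm hs0
      _ < 1 := by rw [mul_one_div, div_lt_one hr]; exact hsr
  set u : (H →L[ℂ] H)ˣ := Units.oneSub t ht with hu
  set C : H →L[ℂ] H := ↑u⁻¹ with hC
  have huval : (u : H →L[ℂ] H) = 1 - t := rfl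
  have hcomm : R₀ * C = C * R₀ := by
    have h1 : Commute R₀ (u : H →L[ℂ] H) := by
      rw [huval]
      exact (Commute.one_right R₀).sub_right (Commute.smul_right (Commute.refl R₀) _)
    exact (h1.units_inv_right).eq
  refine ⟨R₀ * C, ?_, ?_, ?_⟩
  · -- norm bound
    have hCeq : C = 1 + t * C := by
      have h1 : (1 - t) * C = 1 := by rw [← huval, hC]; exact u.mul_inv
      rw [sub_mul, one_mul] at h1
      exact sub_eq_iff_eq_add.mp h1
    have hReq : R₀ * C = R₀ + (s : ℂ) • (R₀ * (R₀ * C)) := by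
      nth_rewrite 1 [hCeq]
      rw [mul_add, mul_one, htdef, smul_mul_assoc, mul_smul_comm]
    have hnorm : ‖R₀ * C‖ ≤ ‖R₀‖ + s * (‖R₀‖ * ‖R₀ * C‖) := by
      calc ‖R₀ * C‖ = ‖R₀ + (s : ℂ) • (R₀ * (R₀ * C))‖ := by rw [← hReq]
        _ ≤ ‖R₀‖ + ‖(s : ℂ) • (R₀ * (R₀ * C))‖ := norm_add_le _ _
        _ ≤ ‖R₀‖ + s * (‖R₀‖ * ‖R₀ * C‖) := by
            rw [norm_smul, Complex.norm_real, Real.norm_eq_abs, abs_of_nonneg hs0]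
            exact add_le_add le_rfl (mul_le_mul_of_nonneg_left (norm_mul_le _ _) hs0)
    have hRC0 : 0 ≤ ‖R₀ * C‖ := norm_nonneg _
    have hrb : 0 < r - b := by linarith
    have hrs : 0 < r - s := by linarith
    have key : ‖R₀ * C‖ ≤ 1 / (r - s) := by
      have h2 : ‖R₀ * C‖ * r ≤ ‖R₀‖ * r + s * (‖R₀‖ * r * ‖R₀ * C‖) := by nlinarith
      have h3 : ‖R₀‖ * r ≤ 1 := by
        have := mul_le_mul_of_nonneg_right hR₀norm (le_of_lt hr)
        rwa [one_div, inv_mul_cancel₀ (ne_of_gt hr)] at this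
      rw [le_div_iff₀ hrs]
      nlinarith [mul_nonneg hs0 hRC0, mul_le_mul_of_nonneg_left h3 (mul_nonneg hs0 hRC0)]
    calc ‖R₀ * C‖ ≤ 1 / (r - s) := key
      _ ≤ 1 / (r - (ω - ω')) := by
          apply one_div_le_one_div_of_le hrb
          linarith
  · -- forward
    intro x
    obtain ⟨hx, hfx⟩ := hfwd (C x)
    have hRx : (R₀ * C) x = R₀ (C x) := rfl
    refine ⟨hRx ▸ hx, ?_⟩
    have hA : A ⟨(R₀ * C) x, hRx ▸ hx⟩ = (z + (s : ℂ)) • R₀ (C x) - C x := by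
      have : A ⟨R₀ (C x), hx⟩ = (z + (s : ℂ)) • R₀ (C x) - C x := by
        have h := hfx
        rw [sub_eq_iff_eq_add] at h
        rw [h]; abel
      convert this using 2
      rfl
    rw [hA, hRx]
    have : z • R₀ (C x) - ((z + (s:ℂ)) • R₀ (C x) - C x)
        = C x - (s : ℂ) • R₀ (C x) := by
      rw [add_smul]; abel
    rw [this]
    have ht' : (s : ℂ) • R₀ (C x) = t (C x) := rfl
    rw [ht']
    have : C x - t (C x) = ((1 - t) * C) x := by
      simp [ContinuousLinearMap.sub_apply, ContinuousLinearMap.mul_apply]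
    rw [this, ← huval, hC, u.mul_inv, ContinuousLinearMap.one_apply]
  · -- backward
    intro y
    have hy : z • (y : H) - A y = ((z + (s:ℂ)) • (y : H) - A y) - (s : ℂ) • (y : H) := by
      rw [add_smul]; abel
    rw [hy, map_sub, hcomm]
    have h1 : (C * R₀) ((z + (s:ℂ)) • (y : H) - A y) = C (R₀ ((z + (s:ℂ)) • (y : H) - A y)) := rfl
    rw [h1, hbwd y]
    have h2 : (C * R₀) ((s : ℂ) • (y : H)) = C ((s : ℂ) • R₀ (y : H)) := by
      simp [ContinuousLinearMap.mul_apply]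
    rw [h2]
    have h3 : C (y : H) - C ((s : ℂ) • R₀ (y : H)) = C ((y : H) - t (y : H)) := by
      rw [map_sub]; rfl
    rw [h3]
    have h4 : (y : H) - t (y : H) = ((1 - t) * C) ((y : H) - t (y : H)) := by
      rw [← huval, hC, u.mul_inv, ContinuousLinearMap.one_apply]
    have : C ((y:H) - t (y:H)) = (C * (1 - t)) (y : H) := by
      simp [ContinuousLinearMap.mul_apply, map_sub]
    rw [this, ← huval, hC, u.inv_mul, ContinuousLinearMap.one_apply]
end

section
/- Let t > 0 and let F : [0,t] → ℝ be continuous with F ≥ 0 and F not identically zero on [0,t]. Then the infimum, taken over all continuous M : [0,t] → ℝ with M ≥ 0 and ∫₀ᵗ M(s) ds = 1, of the supremum over s ∈ [0,t] of M(s)/F(s) — the quotient computed in the extended nonnegative reals [0,∞], with the conventions c/0 = ∞ for c > 0 and 0/0 = 0 — is equal to 1/∫₀ᵗ F(s) ds. -/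
open Set

theorem stmt_1 (t : ℝ) (ht : 0 < t) (F : ℝ → ℝ)
    (hFcont : ContinuousOn F (Icc 0 t))
    (hFnonneg : ∀ s ∈ Icc (0 : ℝ) t, 0 ≤ F s)
    (hFne : ∃ s ∈ Icc (0 : ℝ) t, F s ≠ 0) :
    (⨅ M : {M : ℝ → ℝ // ContinuousOn M (Icc 0 t) ∧
        (∀ s ∈ Icc (0 : ℝ) t, 0 ≤ M s) ∧ (∫ s in (0 : ℝ)..t, M s) = 1},
      ⨆ s ∈ Icc (0 : ℝ) t, ENNReal.ofReal ((M : ℝ → ℝ) s) / ENNReal.ofReal (F s))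
    = (ENNReal.ofReal (∫ s in (0 : ℝ)..t, F s))⁻¹ := by
  set I : ℝ := ∫ s in (0 : ℝ)..t, F s with hIdef
  obtain ⟨s₀, hs₀, hFs₀⟩ := hFne
  have hI : 0 < I := by
    refine intervalIntegral.integral_pos ht hFcont
      (fun x hx => hFnonneg x ⟨hx.1.le, hx.2⟩) ⟨s₀, hs₀, ?_⟩
    exact lt_of_le_of_ne (hFnonneg s₀ hs₀) (Ne.symm hFs₀)
  apply le_antisymm
  · -- upper bound via M = F / I
    have hMcont : ContinuousOn (fun s => F s / I) (Icc 0 t) := hFcont.div_const I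
    have hMnn : ∀ s ∈ Icc (0 : ℝ) t, 0 ≤ F s / I :=
      fun s hs => div_nonneg (hFnonneg s hs) hI.le
    have hMint : (∫ s in (0 : ℝ)..t, F s / I) = 1 := by
      rw [intervalIntegral.integral_div, ← hIdef, div_self hI.ne']
    refine le_trans (iInf_le _ ⟨fun s => F s / I, hMcont, hMnn, hMint⟩) ?_
    refine iSup₂_le fun s hs => ?_
    by_cases hFs : F s = 0
    · simp [hFs]
    · have hFspos : 0 < F s := lt_of_le_of_ne (hFnonneg s hs) (Ne.symm hFs)
      rw [ENNReal.div_eq_inv_mul, ENNReal.ofReal_div_of_pos hI, div_eq_mul_inv,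
        ← mul_assoc, ENNReal.inv_mul_cancel (by simpa using hFspos)
          ENNReal.ofReal_ne_top, one_mul]
  · -- lower bound
    refine le_iInf fun ⟨M, hMc, hMnn, hMint⟩ => ?_
    set S := ⨆ s ∈ Icc (0 : ℝ) t, ENNReal.ofReal (M s) / ENNReal.ofReal (F s) with hSdef
    rcases eq_or_ne S ⊤ with hS | hS
    · simp [hS]
    have hkey : ∀ s ∈ Icc (0 : ℝ) t, M s ≤ S.toReal * F s := by
      intro s hs
      have hle : ENNReal.ofReal (M s) / ENNReal.ofReal (F s) ≤ S := le_iSup₂ (f := fun s (_ : s ∈ Icc (0:ℝ) t) => ENNReal.ofReal (M s) / ENNReal.ofReal (F s)) s hs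
      by_cases hFs : F s = 0
      · by_contra hlt
        push_neg at hlt
        rw [hFs, mul_zero] at hlt
        have : ENNReal.ofReal (M s) / ENNReal.ofReal (F s) = ⊤ := by
          rw [hFs, ENNReal.ofReal_zero, ENNReal.div_zero (by simpa using hlt)]
        exact hS (top_le_iff.mp (this ▸ hle))
      · have hFspos : 0 < F s := lt_of_le_of_ne (hFnonneg s hs) (Ne.symm hFs)
        have h1 : ENNReal.ofReal (M s) ≤ S * ENNReal.ofReal (F s) :=
          (ENNReal.div_le_iff (by simpa using hFspos) ENNReal.ofReal_ne_top).mp hle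
        have h2 : S * ENNReal.ofReal (F s) = ENNReal.ofReal (S.toReal * F s) := by
          rw [ENNReal.ofReal_mul ENNReal.toReal_nonneg, ENNReal.ofReal_toReal hS]
        rw [h2] at h1
        exact (ENNReal.ofReal_le_ofReal_iff
          (mul_nonneg ENNReal.toReal_nonneg hFspos.le)).mp h1
    have hMint' : IntervalIntegrable M MeasureTheory.volume 0 t :=
      hMc.intervalIntegrable_of_Icc ht.le
    have hFint' : IntervalIntegrable (fun s => S.toReal * F s) MeasureTheory.volume 0 t :=
      ((hFcont.const_smul S.toReal).intervalIntegrable_of_Icc ht.le)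
    have h3 : (1 : ℝ) ≤ S.toReal * I := by
      calc (1 : ℝ) = ∫ s in (0 : ℝ)..t, M s := hMint.symm
        _ ≤ ∫ s in (0 : ℝ)..t, S.toReal * F s :=
            intervalIntegral.integral_mono_on ht.le hMint' hFint' hkey
        _ = S.toReal * I := by rw [intervalIntegral.integral_const_mul]
    have h4 : I⁻¹ ≤ S.toReal := by
      rw [inv_le_iff_one_le_mul₀ hI]
      linarith [h3]
    calc (ENNReal.ofReal I)⁻¹ = ENNReal.ofReal I⁻¹ := (ENNReal.ofReal_inv_of_pos hI).symm
      _ ≤ ENNReal.ofReal S.toReal := ENNReal.ofReal_le_ofReal h4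
      _ = S := ENNReal.ofReal_toReal hS
end

section
/- Let a > 0 and let m : [0,a] → ℝ be continuously differentiable with m > 0. Then the infimum over all continuously differentiable u : [0,a] → ℝ with u(0) = 0 and u(a) = 1 of ∫₀ᵃ max(u'(s)² − u(s)², 0) · m(s)² ds is equal to the infimum over the smaller class of continuously differentiable u : [0,a] → ℝ with u(0) = 0, u(a) = 1 and 0 ≤ u(s) ≤ u'(s) for all s ∈ [0,a], of ∫₀ᵃ (u'(s)² − u(s)²) · m(s)² ds. -/
open Set Real

lemma sqrtLip {c : ℝ} (hc : 0 ≤ c) (x y : ℝ) :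
    |Real.sqrt (x ^ 2 + c) - Real.sqrt (y ^ 2 + c)| ≤ |x - y| := by
  set A := Real.sqrt (x ^ 2 + c) with hA
  set B := Real.sqrt (y ^ 2 + c) with hB
  have hA0 : 0 ≤ A := Real.sqrt_nonneg _
  have hB0 : 0 ≤ B := Real.sqrt_nonneg _
  have hA2 : A ^ 2 = x ^ 2 + c := Real.sq_sqrt (by positivity)
  have hB2 : B ^ 2 = y ^ 2 + c := Real.sq_sqrt (by positivity)
  have hAx : |x| ≤ A := by
    rw [hA, ← Real.sqrt_sq_eq_abs]
    exact Real.sqrt_le_sqrt (by linarith)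
  have hBy : |y| ≤ B := by
    rw [hB, ← Real.sqrt_sq_eq_abs]
    exact Real.sqrt_le_sqrt (by linarith)
  rcases eq_or_lt_of_le (add_nonneg hA0 hB0) with h0 | hpos
  · have hA' : A = 0 := by nlinarith
    have hB' : B = 0 := by nlinarith
    simp [hA', hB']
  · have key : |A - B| * (A + B) ≤ |x - y| * (A + B) := by
      have h1 : |A - B| * (A + B) = |x ^ 2 - y ^ 2| := by
        rw [← abs_of_nonneg (add_nonneg hA0 hB0), ← abs_mul]
        congr 1
        nlinarith
      rw [h1, show x ^ 2 - y ^ 2 = (x - y) * (x + y) by ring, abs_mul]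
      have : |x + y| ≤ A + B := (abs_add_le x y).trans (add_le_add hAx hBy)
      exact mul_le_mul_of_nonneg_left this (abs_nonneg _)
    exact le_of_mul_le_mul_right key hpos

lemma sqrt_add_le' {b c : ℝ} (hb : 0 ≤ b) (hc : 0 ≤ c) :
    Real.sqrt (b ^ 2 + c) ≤ b + Real.sqrt c := by
  have h1 : b ^ 2 + c ≤ (b + Real.sqrt c) ^ 2 := by
    have := Real.sq_sqrt hc
    nlinarith [Real.sqrt_nonneg c, mul_nonneg hb (Real.sqrt_nonneg c)]
  calc Real.sqrt (b ^ 2 + c) ≤ Real.sqrt ((b + Real.sqrt c) ^ 2) := Real.sqrt_le_sqrt h1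
    _ = b + Real.sqrt c := Real.sqrt_sq (by positivity)

lemma exists_sol (a : ℝ) (ha : 0 < a) (f : ℝ → ℝ) (hf0 : ∀ t, 0 ≤ f t)
    (hfc : ContinuousOn f (Icc 0 a)) :
    ∃ v : ℝ → ℝ, v 0 = 0 ∧
      (∀ t ∈ Icc (0:ℝ) a, HasDerivWithinAt v (Real.sqrt (v t ^ 2 + f t)) (Icc 0 a) t) ∧
      (∀ t ∈ Icc (0:ℝ) a, 0 ≤ v t) := by
  obtain ⟨M0, hM0⟩ := isCompact_Icc.exists_bound_of_continuousOn hfc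
  set M := max M0 0 with hMdef
  have hM : 0 ≤ M := le_max_right _ _
  have hfM : ∀ t ∈ Icc (0:ℝ) a, f t ≤ M := fun t ht =>
    (le_abs_self _).trans ((hM0 t ht).trans (le_max_left _ _))
  set P : ℝ := Real.sqrt M * Real.exp a + 1 with hPdef
  have hP1 : 1 ≤ P := le_add_of_nonneg_left (by positivity)
  have hP0 : 0 < P := lt_of_lt_of_le one_pos hP1
  set F : ℝ → ℝ → ℝ := fun t x => Real.sqrt ((min |x| P) ^ 2 + f t) with hFdef
  set C : ℝ := Real.sqrt (P ^ 2 + M) with hCdef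
  set R : ℝ := C * a with hRdef
  have hpl : IsPicardLindelof (tmin := 0) (tmax := a) F ⟨0, left_mem_Icc.2 ha.le⟩ 0
      ⟨R, mul_nonneg (Real.sqrt_nonneg _) ha.le⟩ 0 ⟨C, Real.sqrt_nonneg _⟩ 1 := by
    refine ⟨?_, ?_, ?_, ?_⟩
    · intro t _
      apply LipschitzWith.lipschitzOnWith
      apply LipschitzWith.of_dist_le_mul
      intro x y
      rw [Real.dist_eq, Real.dist_eq, NNReal.coe_one, one_mul]
      calc |F t x - F t y| ≤ abs (min (abs x) P - min (abs y) P) := sqrtLip (hf0 t) _ _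
        _ ≤ max (abs (abs x - abs y)) (abs (P - P)) := abs_min_sub_min_le_max _ _ _ _
        _ ≤ |x - y| := by
            rw [sub_self, abs_zero]
            exact max_le (abs_abs_sub_abs_le_abs_sub _ _) (abs_nonneg _)
    · intro x _
      exact Real.continuous_sqrt.comp_continuousOn (continuousOn_const.add hfc)
    · intro t ht x _
      rw [Real.norm_eq_abs, abs_of_nonneg (Real.sqrt_nonneg _)]
      apply Real.sqrt_le_sqrt
      have h1 : 0 ≤ min |x| P := le_min (abs_nonneg _) hP0.le
      have h2 : min |x| P ≤ P := min_le_right _ _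
      nlinarith [hfM t ht]
    · show C * max (a - 0) (0 - 0) ≤ R - 0
      rw [sub_zero, sub_zero, max_eq_left ha.le]
      simp [hRdef]
  obtain ⟨v, hv0, hvd⟩ : ∃ v : ℝ → ℝ, v 0 = 0 ∧
      ∀ t ∈ Icc (0:ℝ) a, HasDerivWithinAt v (F t (v t)) (Icc 0 a) t :=
    hpl.exists_eq_forall_mem_Icc_hasDerivWithinAt₀
  have hvcont : ContinuousOn v (Icc 0 a) := fun t ht => (hvd t ht).continuousWithinAt
  have hIci : ∀ x ∈ Ico (0:ℝ) a, HasDerivWithinAt v (F x (v x)) (Ici x) x := fun x hx =>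
    ((hvd x (Ico_subset_Icc_self hx)).mono (Icc_subset_Icc_left hx.1)).mono_of_mem_nhdsWithin
      (Icc_mem_nhdsGE_of_mem ⟨le_rfl, hx.2⟩)
  have hvnn : ∀ t ∈ Icc (0:ℝ) a, 0 ≤ v t := by
    intro t ht
    have := le_gronwallBound_of_liminf_deriv_right_le (f := fun t => -v t)
      (f' := fun t => -(F t (v t))) (δ := 0) (K := 0) (ε := 0) (a := 0) (b := a)
      hvcont.neg
      (fun x hx r hr => ((hIci x hx).neg).liminf_right_slope_le hr)
      (by simp [hv0])
      (fun x _ => by simp only [zero_mul, add_zero, neg_nonpos]; exact Real.sqrt_nonneg _)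
      t ht
    rw [gronwallBound_K0] at this
    simpa using this
  have hvle : ∀ t ∈ Icc (0:ℝ) a, v t ≤ Real.sqrt M * (Real.exp t - 1) := by
    intro t ht
    have := le_gronwallBound_of_liminf_deriv_right_le (f := v)
      (f' := fun t => F t (v t)) (δ := 0) (K := 1) (ε := Real.sqrt M) (a := 0) (b := a)
      hvcont
      (fun x hx r hr => (hIci x hx).liminf_right_slope_le hr)
      (le_of_eq hv0)
      (fun x hx => by
        have h1 : 0 ≤ min |v x| P := le_min (abs_nonneg _) hP0.le
        have h2 : min |v x| P ≤ v x := by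
          rw [abs_of_nonneg (hvnn x (Ico_subset_Icc_self hx))] at *
          exact min_le_left _ _
        have h3 : Real.sqrt (f x) ≤ Real.sqrt M :=
          Real.sqrt_le_sqrt (hfM x (Ico_subset_Icc_self hx))
        calc F x (v x) ≤ min |v x| P + Real.sqrt (f x) := sqrt_add_le' h1 (hf0 x)
          _ ≤ 1 * v x + Real.sqrt M := by rw [one_mul]; exact add_le_add h2 h3)
      t ht
    rw [gronwallBound_of_K_ne_0 one_ne_zero] at this
    simpa using this
  have hmin : ∀ t ∈ Icc (0:ℝ) a, min |v t| P = |v t| := by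
    intro t ht
    apply min_eq_left
    rw [abs_of_nonneg (hvnn t ht)]
    have h1 : Real.sqrt M * (Real.exp t - 1) ≤ Real.sqrt M * Real.exp a := by
      have : Real.exp t - 1 ≤ Real.exp a := by
        have := Real.exp_le_exp.2 ht.2
        linarith
      exact mul_le_mul_of_nonneg_left this (Real.sqrt_nonneg _)
    have := hvle t ht
    rw [hPdef]
    linarith
  refine ⟨v, hv0, fun t ht => ?_, hvnn⟩
  have : F t (v t) = Real.sqrt (v t ^ 2 + f t) := by
    rw [hFdef]
    simp only
    rw [hmin t ht, sq_abs]
  rw [← this]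
  exact hvd t ht

lemma le_sol {a : ℝ} (ha : 0 < a) {u u' v f : ℝ → ℝ}
    (hu : ∀ s ∈ Icc (0:ℝ) a, HasDerivWithinAt u (u' s) (Icc 0 a) s)
    (hv : ∀ t ∈ Icc (0:ℝ) a, HasDerivWithinAt v (Real.sqrt (v t ^ 2 + f t)) (Icc 0 a) t)
    (hu0 : u 0 = 0) (hv0 : v 0 = 0)
    (hf : ∀ s ∈ Icc (0:ℝ) a, u' s ^ 2 - u s ^ 2 ≤ f s) (hf0 : ∀ t, 0 ≤ f t) :
    ∀ t ∈ Icc (0:ℝ) a, u t ≤ v t := by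
  have hucont : ContinuousOn u (Icc 0 a) := fun s hs => (hu s hs).continuousWithinAt
  have hvcont : ContinuousOn v (Icc 0 a) := fun s hs => (hv s hs).continuousWithinAt
  have hIci : ∀ {h : ℝ → ℝ} {d : ℝ → ℝ},
      (∀ s ∈ Icc (0:ℝ) a, HasDerivWithinAt h (d s) (Icc 0 a) s) →
      ∀ x ∈ Ico (0:ℝ) a, HasDerivWithinAt h (d x) (Ici x) x := fun hder x hx =>
    ((hder x (Ico_subset_Icc_self hx)).mono (Icc_subset_Icc_left hx.1)).mono_of_mem_nhdsWithin
      (Icc_mem_nhdsGE_of_mem ⟨le_rfl, hx.2⟩)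
  have key : ∀ ε > (0:ℝ), ∀ t ∈ Icc (0:ℝ) a, u t ≤ v t + ε * Real.exp (2 * t) := by
    intro ε hε
    have hexp : ∀ x : ℝ, HasDerivAt (fun t => ε * Real.exp (2 * t))
        (ε * (Real.exp (2 * x) * 2)) x := by
      intro x
      have h2x : HasDerivAt (fun t : ℝ => 2 * t) 2 x := by
        simpa using (hasDerivAt_id x).const_mul (2:ℝ)
      exact h2x.exp.const_mul ε
    intro t ht
    apply image_le_of_deriv_right_lt_deriv_boundary' (f := u) (f' := u')
      (B := fun t => v t + ε * Real.exp (2 * t))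
      (B' := fun x => Real.sqrt (v x ^ 2 + f x) + ε * (Real.exp (2 * x) * 2))
      hucont (hIci hu)
      (by simp only [hu0, hv0, zero_add]; positivity)
      (hvcont.add (Continuous.continuousOn (continuous_const.mul (Real.continuous_exp.comp (continuous_const.mul continuous_id)))))
      (fun x hx => ((hIci hv) x hx).add (hexp x).hasDerivWithinAt)
      ?_ ht
    intro x hx heq
    show u' x < Real.sqrt (v x ^ 2 + f x) + ε * (Real.exp (2 * x) * 2)
    change u x = v x + ε * Real.exp (2 * x) at heq
    set δ := ε * Real.exp (2 * x) with hδdef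
    have hδ : 0 < δ := by positivity
    have h1 : u' x ≤ Real.sqrt (u x ^ 2 + f x) := by
      calc u' x ≤ |u' x| := le_abs_self _
        _ = Real.sqrt (u' x ^ 2) := (Real.sqrt_sq_eq_abs _).symm
        _ ≤ Real.sqrt (u x ^ 2 + f x) := Real.sqrt_le_sqrt
            (by have := hf x (Ico_subset_Icc_self hx); linarith)
    have h2 : Real.sqrt (u x ^ 2 + f x) ≤ Real.sqrt (v x ^ 2 + f x) + δ := by
      rw [heq]
      have := sqrtLip (hf0 x) (v x + δ) (v x)
      rw [show v x + δ - v x = δ by ring, abs_of_pos hδ] at this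
      have h3 := (le_abs_self _).trans this
      linarith
    have : u' x ≤ Real.sqrt (v x ^ 2 + f x) + δ := h1.trans h2
    have h4 : δ < ε * (Real.exp (2 * x) * 2) := by
      rw [hδdef]; nlinarith [Real.exp_pos (2 * x)]
    linarith
  intro t ht
  by_contra hlt
  push_neg at hlt
  set ε := (u t - v t) / (2 * Real.exp (2 * t)) with hεdef
  have hε : 0 < ε := by
    apply div_pos (by linarith) (by positivity)
  have := key ε hε t ht
  have hc : ε * Real.exp (2 * t) = (u t - v t) / 2 := by
    rw [hεdef]
    field_simp
  rw [hc] at this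
  linarith

theorem stmt_2 (a : ℝ) (ha : 0 < a) (m m' : ℝ → ℝ)
    (hm : ∀ s ∈ Icc (0 : ℝ) a, HasDerivWithinAt m (m' s) (Icc 0 a) s)
    (hm'c : ContinuousOn m' (Icc 0 a))
    (hmpos : ∀ s ∈ Icc (0 : ℝ) a, 0 < m s) :
    sInf {I : ℝ | ∃ u u' : ℝ → ℝ,
        (∀ s ∈ Icc (0 : ℝ) a, HasDerivWithinAt u (u' s) (Icc 0 a) s) ∧
        ContinuousOn u' (Icc 0 a) ∧ u 0 = 0 ∧ u a = 1 ∧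
        I = ∫ s in (0 : ℝ)..a, max (u' s ^ 2 - u s ^ 2) 0 * m s ^ 2}
    = sInf {I : ℝ | ∃ u u' : ℝ → ℝ,
        (∀ s ∈ Icc (0 : ℝ) a, HasDerivWithinAt u (u' s) (Icc 0 a) s) ∧
        ContinuousOn u' (Icc 0 a) ∧ u 0 = 0 ∧ u a = 1 ∧
        (∀ s ∈ Icc (0 : ℝ) a, 0 ≤ u s ∧ u s ≤ u' s) ∧
        I = ∫ s in (0 : ℝ)..a, (u' s ^ 2 - u s ^ 2) * m s ^ 2} := by
  set S₁ := {I : ℝ | ∃ u u' : ℝ → ℝ,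
        (∀ s ∈ Icc (0 : ℝ) a, HasDerivWithinAt u (u' s) (Icc 0 a) s) ∧
        ContinuousOn u' (Icc 0 a) ∧ u 0 = 0 ∧ u a = 1 ∧
        I = ∫ s in (0 : ℝ)..a, max (u' s ^ 2 - u s ^ 2) 0 * m s ^ 2} with hS₁
  set S₂ := {I : ℝ | ∃ u u' : ℝ → ℝ,
        (∀ s ∈ Icc (0 : ℝ) a, HasDerivWithinAt u (u' s) (Icc 0 a) s) ∧
        ContinuousOn u' (Icc 0 a) ∧ u 0 = 0 ∧ u a = 1 ∧
        (∀ s ∈ Icc (0 : ℝ) a, 0 ≤ u s ∧ u s ≤ u' s) ∧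
        I = ∫ s in (0 : ℝ)..a, (u' s ^ 2 - u s ^ 2) * m s ^ 2} with hS₂
  -- the small class is contained in the big class (with equal integrals)
  have hsub : S₂ ⊆ S₁ := by
    rintro I ⟨u, u', hud, huc, hu0, hua, hcon, hIeq⟩
    refine ⟨u, u', hud, huc, hu0, hua, ?_⟩
    rw [hIeq]
    apply intervalIntegral.integral_congr
    intro s hs
    rw [uIcc_of_le ha.le] at hs
    obtain ⟨h0, h1⟩ := hcon s hs
    show (u' s ^ 2 - u s ^ 2) * m s ^ 2 = max (u' s ^ 2 - u s ^ 2) 0 * m s ^ 2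
    rw [max_eq_left (by nlinarith)]
  -- explicit element of the small class
  have hEa : (1:ℝ) < Real.exp a := by
    calc (1:ℝ) = Real.exp 0 := Real.exp_zero.symm
      _ < Real.exp a := Real.exp_lt_exp.2 ha
  have hden : (0:ℝ) < Real.exp a - 1 := by linarith
  have hne₂ : S₂.Nonempty := by
    refine ⟨_, fun s => (Real.exp s - 1) / (Real.exp a - 1),
      fun s => Real.exp s / (Real.exp a - 1), fun s _ =>
        (((Real.hasDerivAt_exp s).sub_const 1).div_const _).hasDerivWithinAt, ?_, by simp, ?_, ?_, rfl⟩
    · exact (Real.continuous_exp.div_const _).continuousOn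
    · show (Real.exp a - 1) / (Real.exp a - 1) = 1
      rw [div_self hden.ne']
    · intro s hs
      have h1 : (1:ℝ) ≤ Real.exp s := by
        calc (1:ℝ) = Real.exp 0 := Real.exp_zero.symm
          _ ≤ Real.exp s := Real.exp_le_exp.2 hs.1
      constructor
      · apply div_nonneg (by linarith) hden.le
      · rw [div_le_div_iff_of_pos_right hden]
        linarith
  have hne₁ : S₁.Nonempty := hne₂.mono hsub
  have hbdd₁ : BddBelow S₁ := by
    refine ⟨0, ?_⟩
    rintro I ⟨u, u', _, _, _, _, hIeq⟩
    rw [hIeq]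
    apply intervalIntegral.integral_nonneg ha.le
    intro s _
    exact mul_nonneg (le_max_right _ 0) (sq_nonneg _)
  have hbdd₂ : BddBelow S₂ := hbdd₁.mono hsub
  apply le_antisymm (csInf_le_csInf hbdd₁ hne₂ hsub)
  apply le_csInf hne₁
  rintro I ⟨u, u', hud, huc, hu0, hua, hIeq⟩
  set f : ℝ → ℝ := fun s => max (u' s ^ 2 - u s ^ 2) 0 with hfdef
  have hf0 : ∀ t, 0 ≤ f t := fun t => le_max_right _ 0
  have hucont : ContinuousOn u (Icc 0 a) := fun s hs => (hud s hs).continuousWithinAt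
  have hfc : ContinuousOn f (Icc 0 a) :=
    ((huc.pow 2).sub (hucont.pow 2)).sup continuousOn_const
  obtain ⟨v, hv0, hvd, hvnn⟩ := exists_sol a ha f hf0 hfc
  have hvcont : ContinuousOn v (Icc 0 a) := fun s hs => (hvd s hs).continuousWithinAt
  have hcomp := le_sol ha hud hvd hu0 hv0 (fun s _ => le_max_left _ 0) hf0
  set c := v a with hcdef
  have hc1 : (1:ℝ) ≤ c := by
    have := hcomp a (right_mem_Icc.2 ha.le)
    rwa [hua] at this
  have hc0 : (0:ℝ) < c := lt_of_lt_of_le one_pos hc1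
  set g : ℝ → ℝ := fun t => Real.sqrt (v t ^ 2 + f t) with hgdef
  have hgsq : ∀ t, g t ^ 2 = v t ^ 2 + f t := fun t =>
    Real.sq_sqrt (by positivity)
  set J : ℝ := ∫ s in (0:ℝ)..a, ((fun t => g t / c) s ^ 2 - (fun t => v t / c) s ^ 2) * m s ^ 2
    with hJdef
  have hJmem : J ∈ S₂ := by
    refine ⟨fun t => v t / c, fun t => g t / c,
      fun s hs => (hvd s hs).div_const c, ?_, by simp [hv0], by show v a / c = 1; rw [← hcdef]; exact div_self hc0.ne', ?_, rfl⟩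
    · exact (Real.continuous_sqrt.comp_continuousOn ((hvcont.pow 2).add hfc)).div_const c
    · intro s hs
      constructor
      · exact div_nonneg (hvnn s hs) hc0.le
      · rw [div_le_div_iff_of_pos_right hc0]
        calc v s = Real.sqrt (v s ^ 2) := (Real.sqrt_sq (hvnn s hs)).symm
          _ ≤ g s := Real.sqrt_le_sqrt (le_add_of_nonneg_right (hf0 s))
  have hJle : J ≤ I := by
    have hpt : ∀ s : ℝ, ((fun t => g t / c) s ^ 2 - (fun t => v t / c) s ^ 2) * m s ^ 2
        = (c ^ 2)⁻¹ * (max (u' s ^ 2 - u s ^ 2) 0 * m s ^ 2) := by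
      intro s
      have h : g s ^ 2 = v s ^ 2 + max (u' s ^ 2 - u s ^ 2) 0 := hgsq s
      have hc2 : c ^ 2 ≠ 0 := by positivity
      show ((g s / c) ^ 2 - (v s / c) ^ 2) * m s ^ 2
          = (c ^ 2)⁻¹ * (max (u' s ^ 2 - u s ^ 2) 0 * m s ^ 2)
      rw [div_pow, div_pow, h]
      field_simp
      ring
    have hI0 : 0 ≤ I := by
      rw [hIeq]
      apply intervalIntegral.integral_nonneg ha.le
      intro s _
      exact mul_nonneg (le_max_right _ 0) (sq_nonneg _)
    have : J = (c ^ 2)⁻¹ * I := by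
      rw [hJdef, hIeq]
      simp only [hpt]
      rw [intervalIntegral.integral_const_mul]
    rw [this]
    have hcinv : (c ^ 2)⁻¹ ≤ 1 := by
      rw [inv_le_one_iff₀]
      right
      nlinarith
    nlinarith
  exact (csInf_le hbdd₂ hJmem).trans hJle
end

section
/- Let a > 0 and let u, v : [0,a] → ℝ be continuously differentiable with u(0) = v(0) = 0, u'(s) > 0 and v'(s) ≥ 0 for all s ∈ [0,a], and suppose v'(s)² − v(s)² = max(u'(s)² − u(s)², 0) for all s ∈ [0,a]. Then v(s) ≥ u(s) for all s ∈ [0,a]. -/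
open Set

theorem stmt_3 (a : ℝ) (ha : 0 < a) (u v u' v' : ℝ → ℝ)
    (hu : ∀ s ∈ Icc (0 : ℝ) a, HasDerivWithinAt u (u' s) (Icc 0 a) s)
    (hv : ∀ s ∈ Icc (0 : ℝ) a, HasDerivWithinAt v (v' s) (Icc 0 a) s)
    (hu'c : ContinuousOn u' (Icc 0 a)) (hv'c : ContinuousOn v' (Icc 0 a))
    (hu0 : u 0 = 0) (hv0 : v 0 = 0)
    (hu'pos : ∀ s ∈ Icc (0 : ℝ) a, 0 < u' s)
    (hv'nonneg : ∀ s ∈ Icc (0 : ℝ) a, 0 ≤ v' s)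
    (heq : ∀ s ∈ Icc (0 : ℝ) a, v' s ^ 2 - v s ^ 2 = max (u' s ^ 2 - u s ^ 2) 0) :
    ∀ s ∈ Icc (0 : ℝ) a, u s ≤ v s := by
  -- basic continuity
  have huc : ContinuousOn u (Icc 0 a) := fun x hx => (hu x hx).continuousWithinAt
  have hvc : ContinuousOn v (Icc 0 a) := fun x hx => (hv x hx).continuousWithinAt
  have hsumpos : ∀ x ∈ Icc (0 : ℝ) a, 0 < u' x + v' x := fun x hx =>
    add_pos_of_pos_of_nonneg (hu'pos x hx) (hv'nonneg x hx)
  -- key differential inequality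
  have key : ∀ x ∈ Icc (0 : ℝ) a,
      u' x - v' x ≤ (u x - v x) * ((u x + v x) / (u' x + v' x)) := by
    intro x hx
    have h1 : u' x ^ 2 - u x ^ 2 ≤ v' x ^ 2 - v x ^ 2 := (heq x hx).ge.trans' (le_max_left _ _)
    have h2 : (u' x - v' x) * (u' x + v' x) ≤ (u x - v x) * (u x + v x) := by nlinarith
    rw [mul_div_assoc' , le_div_iff₀ (hsumpos x hx)]
    exact h2
  -- bound for the coefficient
  have hCcont : ContinuousOn (fun x => (u x + v x) / (u' x + v' x)) (Icc 0 a) :=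
    (huc.add hvc).div (hu'c.add hv'c) (fun x hx => (hsumpos x hx).ne')
  obtain ⟨K, hK⟩ := (isCompact_Icc).exists_bound_of_continuousOn hCcont
  -- the function F = max (u - v) 0
  set f : ℝ → ℝ := fun x => u x - v x with hf_def
  set F : ℝ → ℝ := fun x => max (f x) 0 with hF_def
  set F' : ℝ → ℝ := fun x => if 0 < f x then u' x - v' x else 0 with hF'_def
  have hfc : ContinuousOn f (Icc 0 a) := huc.sub hvc
  have hFc : ContinuousOn F (Icc 0 a) := fun x hx => (hfc x hx).max continuousWithinAt_const
  -- membership facts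
  have hmem : ∀ x ∈ Ico (0 : ℝ) a, Icc (0 : ℝ) a ∈ nhdsWithin x (Ioi x) := by
    intro x hx
    refine Filter.mem_of_superset (Filter.inter_mem self_mem_nhdsWithin
      (mem_nhdsWithin_of_mem_nhds (Iio_mem_nhds hx.2))) ?_
    rintro z ⟨hz1, hz2⟩
    exact ⟨le_of_lt (lt_of_le_of_lt hx.1 hz1), le_of_lt hz2⟩
  have hderiv : ∀ x ∈ Ico (0 : ℝ) a, HasDerivWithinAt f (u' x - v' x) (Ici x) x := by
    intro x hx
    have := ((hu x (Ico_subset_Icc_self hx)).sub (hv x (Ico_subset_Icc_self hx)))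
    have h2 : HasDerivWithinAt f (u' x - v' x) (Ioi x) x := by
      apply this.mono_of_mem_nhdsWithin (hmem x hx)
    exact h2.Ici_of_Ioi
  -- the liminf slope condition
  have hslope : ∀ x ∈ Ico (0 : ℝ) a, ∀ r, F' x < r →
      ∃ᶠ z in nhdsWithin x (Ioi x), (z - x)⁻¹ * (F z - F x) < r := by
    intro x hx r hr
    have hle : nhdsWithin x (Ioi x) ≤ nhdsWithin x (Icc (0:ℝ) a) :=
      nhdsWithin_le_of_mem (hmem x hx)
    rcases lt_trichotomy (f x) 0 with hneg | hzero | hpos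
    · -- f x < 0 : F = 0 near x
      have h0 : 0 < r := by simpa [hF'_def, not_lt.mpr hneg.le] using hr
      have hev : ∀ᶠ z in nhdsWithin x (Ioi x), f z < 0 := by
        have := (hfc x (Ico_subset_Icc_self hx)).eventually_lt_const hneg
        exact hle this
      refine (hev.mono ?_).frequently
      intro z hz
      have hFx : F x = 0 := max_eq_right hneg.le
      have hFz : F z = 0 := max_eq_right hz.le
      simp [hFx, hFz, h0]
    · -- f x = 0
      have hf'le : u' x - v' x ≤ 0 := by
        have := key x (Ico_subset_Icc_self hx)
        have hz : f x = 0 := hzero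
        simp only [hf_def] at hz
        rw [hz] at this
        simpa using this
      have h0 : 0 < r := by
        simpa [hF'_def, hzero, lt_irrefl] using hr
      have hfr : ∃ᶠ z in nhdsWithin x (Ioi x), (z - x)⁻¹ * (f z - f x) < r :=
        (hderiv x hx).liminf_right_slope_le (lt_of_le_of_lt hf'le h0)
      refine hfr.mp (Filter.eventually_of_mem self_mem_nhdsWithin ?_)
      intro z hz hlt
      have hzx : (0:ℝ) < z - x := sub_pos.mpr hz
      have hFx : F x = 0 := by simp [hF_def, hzero]
      have hFz : F z ≤ max ((f z - f x)) 0 := by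
        simp [hF_def, hzero]
      calc (z - x)⁻¹ * (F z - F x) ≤ (z - x)⁻¹ * max (f z - f x) 0 := by
            rw [hFx, sub_zero]
            exact mul_le_mul_of_nonneg_left hFz (inv_nonneg.mpr hzx.le)
        _ = max ((z - x)⁻¹ * (f z - f x)) 0 := by
            rw [mul_max_of_nonneg _ _ (inv_nonneg.mpr hzx.le), mul_zero]
        _ < r := max_lt hlt h0
    · -- f x > 0
      have hr' : u' x - v' x < r := by simpa [hF'_def, hpos] using hr
      have hfr : ∃ᶠ z in nhdsWithin x (Ioi x), (z - x)⁻¹ * (f z - f x) < r :=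
        (hderiv x hx).liminf_right_slope_le hr'
      have hev : ∀ᶠ z in nhdsWithin x (Ioi x), 0 < f z := by
        have := (hfc x (Ico_subset_Icc_self hx)).eventually_const_lt hpos
        exact hle this
      refine (hfr.and_eventually hev).mono ?_
      rintro z ⟨hlt, hzpos⟩
      have hFx : F x = f x := max_eq_left hpos.le
      have hFz : F z = f z := max_eq_left hzpos.le
      rw [hFx, hFz]; exact hlt
  -- the bound
  have hbound : ∀ x ∈ Ico (0 : ℝ) a, F' x ≤ K * F x + 0 := by
    intro x hx
    rw [add_zero]
    rcases le_or_gt (f x) 0 with hle | hpos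
    · have hFx : F x = 0 := max_eq_right hle
      have : F' x = 0 := by simp [hF'_def, not_lt.mpr hle]
      rw [this, hFx, mul_zero]
    · have hFx : F x = f x := max_eq_left hpos.le
      have hC : (u x + v x) / (u' x + v' x) ≤ K := by
        have := hK x (Ico_subset_Icc_self hx)
        rw [Real.norm_eq_abs] at this
        exact (le_abs_self _).trans this
      have : F' x = u' x - v' x := by simp [hF'_def, hpos]
      rw [this, hFx]
      calc u' x - v' x ≤ (u x - v x) * ((u x + v x) / (u' x + v' x)) :=
            key x (Ico_subset_Icc_self hx)
        _ ≤ (u x - v x) * K := mul_le_mul_of_nonneg_left hC hpos.le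
        _ = K * f x := by rw [hf_def]; ring
  -- apply Gronwall
  have hmain := le_gronwallBound_of_liminf_deriv_right_le (δ := 0) (K := K) (ε := 0)
    hFc hslope (by simp [hF_def, hf_def, hu0, hv0]) hbound
  intro s hs
  have := hmain s hs
  rw [gronwallBound_ε0_δ0] at this
  have hFs : f s ≤ F s := le_max_left _ _
  have h2 : u s - v s ≤ 0 := hFs.trans this
  linarith
end

section
/- Let σ < τ be reals, let μ : [σ,τ) → ℝ be continuous, and let ψ : [σ,τ) → ℝ be differentiable with ψ'(s) = −(ψ(s)² + 2μ(s)ψ(s) + 1) for all s ∈ [σ,τ). Define f₊ : [σ,τ) → ℝ by f₊(s) = 1 if μ(s) ≥ −1 and f₊(s) = −μ(s) + √(μ(s)² − 1) if μ(s) < −1. Then for all s₀, s with σ ≤ s₀ ≤ s < τ one has ψ(s) ≤ max( ψ(s₀), max_{σ' ∈ [s₀,s]} f₊(σ') ). -/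
open Set

lemma aux_pos (m y : ℝ)
    (h : (if -1 ≤ m then (1:ℝ) else -m + Real.sqrt (m ^ 2 - 1)) < y) :
    0 < y ^ 2 + 2 * m * y + 1 := by
  by_cases hm : -1 ≤ m
  · rw [if_pos hm] at h
    nlinarith [mul_pos (sub_pos.2 h) (sub_pos.2 h),
      mul_nonneg (by linarith : (0:ℝ) ≤ y) (by linarith : (0:ℝ) ≤ 1 + m)]
  · rw [if_neg hm] at h
    push_neg at hm
    have hge : (0:ℝ) ≤ m ^ 2 - 1 := by nlinarith
    set r := Real.sqrt (m ^ 2 - 1) with hr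
    have hr2 : r ^ 2 = m ^ 2 - 1 := Real.sq_sqrt hge
    have hr0 : 0 ≤ r := Real.sqrt_nonneg _
    have h1 : r < y + m := by linarith
    have h2 : 0 < y + m + r := by linarith
    nlinarith [mul_pos (sub_pos.2 h1) h2]

lemma aux_bdd (m C : ℝ) (hC : |m| ≤ C) :
    (if -1 ≤ m then (1:ℝ) else -m + Real.sqrt (m ^ 2 - 1)) ≤ 1 + 2 * C := by
  have h0 : 0 ≤ C := (abs_nonneg m).trans hC
  by_cases hm : -1 ≤ m
  · rw [if_pos hm]; linarith
  · rw [if_neg hm]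
    push_neg at hm
    have h1 : Real.sqrt (m ^ 2 - 1) ≤ |m| := by
      calc Real.sqrt (m ^ 2 - 1) ≤ Real.sqrt (m ^ 2) := Real.sqrt_le_sqrt (by nlinarith)
        _ = |m| := by rw [← sq_abs]; exact Real.sqrt_sq (abs_nonneg m)
    have h2 : -m ≤ |m| := neg_le_abs m
    linarith

theorem stmt_5 (σ τ : ℝ) (hστ : σ < τ) (μ ψ : ℝ → ℝ)
    (hμ : ContinuousOn μ (Ico σ τ))
    (hψ : ∀ s ∈ Ico σ τ,
      HasDerivWithinAt ψ (-(ψ s ^ 2 + 2 * μ s * ψ s + 1)) (Ico σ τ) s) :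
    ∀ s₀ ∈ Ico σ τ, ∀ s ∈ Ico σ τ, s₀ ≤ s →
      ψ s ≤ max (ψ s₀)
        (sSup ((fun x => if -1 ≤ μ x then 1 else -μ x + Real.sqrt (μ x ^ 2 - 1)) ''
          Icc s₀ s)) := by
  intro s₀ hs₀ s hs hle
  set f : ℝ → ℝ := fun x => if -1 ≤ μ x then 1 else -μ x + Real.sqrt (μ x ^ 2 - 1) with hf
  have hsub : Icc s₀ s ⊆ Ico σ τ := fun x hx => ⟨hs₀.1.trans hx.1, lt_of_le_of_lt hx.2 hs.2⟩
  obtain ⟨C, hC⟩ : ∃ C, ∀ x ∈ Icc s₀ s, ‖μ x‖ ≤ C :=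
    isCompact_Icc.exists_bound_of_continuousOn (hμ.mono hsub)
  have hbdd : BddAbove (f '' Icc s₀ s) := by
    refine ⟨1 + 2 * C, ?_⟩
    rintro y ⟨x, hx, rfl⟩
    exact aux_bdd (μ x) C (hC x hx)
  set S := sSup (f '' Icc s₀ s) with hS
  have hfleS : ∀ x ∈ Icc s₀ s, f x ≤ S := fun x hx =>
    le_csSup hbdd (mem_image_of_mem f hx)
  set M := max (ψ s₀) S with hM
  have key : ∀ ε > (0:ℝ), ψ s ≤ M + ε * (s - s₀ + 1) := by
    intro ε hε
    have hψc : ContinuousOn ψ (Icc s₀ s) := fun x hx =>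
      (((hψ x (hsub hx)).continuousWithinAt).mono hsub)
    have hψ' : ∀ x ∈ Ico s₀ s,
        HasDerivWithinAt ψ (-(ψ x ^ 2 + 2 * μ x * ψ x + 1)) (Ici x) x := by
      intro x hx
      have hxm : x ∈ Ico σ τ := ⟨hs₀.1.trans hx.1, lt_of_lt_of_le hx.2 (le_of_lt hs.2)⟩
      refine (hψ x hxm).mono_of_mem_nhdsWithin ?_
      rw [mem_nhdsWithin]
      exact ⟨Iio τ, isOpen_Iio, hxm.2, fun y hy => ⟨hxm.1.trans hy.2, hy.1⟩⟩
    have hB : ∀ x : ℝ, HasDerivAt (fun x => M + ε * (x - s₀ + 1)) ε x := by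
      intro x
      simpa using (((hasDerivAt_id x).sub_const s₀).add_const 1).const_mul ε |>.const_add M
    have := image_le_of_deriv_right_lt_deriv_boundary (f' := fun x => -(ψ x ^ 2 + 2 * μ x * ψ x + 1))
      hψc hψ' (by simp; nlinarith [le_max_left (ψ s₀) S] : ψ s₀ ≤ M + ε * (s₀ - s₀ + 1)) hB
      (fun x hx hxe => ?_) (right_mem_Icc.2 hle)
    · exact this
    · have hxI : x ∈ Icc s₀ s := ⟨hx.1, le_of_lt hx.2⟩
      have h1 : f x < ψ x := by
        have : S ≤ M := le_max_right _ _
        have h2 : (0:ℝ) < ε * (x - s₀ + 1) := by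
          have : (0:ℝ) < x - s₀ + 1 := by
            have := hx.1; linarith
          positivity
        calc f x ≤ S := hfleS x hxI
          _ ≤ M := le_max_right _ _
          _ < M + ε * (x - s₀ + 1) := by linarith
          _ = ψ x := hxe.symm
      have := aux_pos (μ x) (ψ x) h1
      show -(ψ x ^ 2 + 2 * μ x * ψ x + 1) < ε
      linarith
  refine le_of_forall_pos_le_add ?_
  intro ε hε
  have hd : (0:ℝ) < s - s₀ + 1 := by linarith
  have := key (ε / (s - s₀ + 1)) (by positivity)
  have heq : ε / (s - s₀ + 1) * (s - s₀ + 1) = ε := div_mul_cancel₀ ε (ne_of_gt hd)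
  linarith [this, heq.le]
end

section
/- Let σ < τ be reals and let φ : [σ,τ] → ℝ be continuous. Set λ = (φ(τ) − φ(σ))/(τ − σ). Then for every ε > 0 there exist σ̃, τ̃ with σ ≤ σ̃ < τ̃ ≤ τ, τ̃ − σ̃ < ε, and (φ(τ̃) − φ(σ̃))/(τ̃ − σ̃) = λ. -/
open Set

theorem stmt_6 (σ τ : ℝ) (hστ : σ < τ) (φ : ℝ → ℝ)
    (hφ : ContinuousOn φ (Icc σ τ)) :
    ∀ ε > 0, ∃ σ' τ' : ℝ, σ ≤ σ' ∧ σ' < τ' ∧ τ' ≤ τ ∧ τ' - σ' < ε ∧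
      (φ τ' - φ σ') / (τ' - σ') = (φ τ - φ σ) / (τ - σ) := by
  intro ε hε
  obtain ⟨N, hN⟩ := exists_nat_gt ((τ - σ) / ε)
  have hτσ : (0:ℝ) < τ - σ := by linarith
  have hN0 : 0 < (N:ℝ) := lt_trans (div_pos hτσ hε) hN
  set h : ℝ := (τ - σ) / N with hh
  have hh0 : 0 < h := div_pos hτσ hN0
  have hhε : h < ε := by
    rw [hh, div_lt_iff₀ hN0]
    have := (div_lt_iff₀ hε).mp hN
    linarith
  set c : ℝ := (φ τ - φ σ) / N with hc
  set ψ : ℝ → ℝ := fun x => φ (x + h) - φ x - c with hψ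
  -- points of subdivision
  have hpt : ∀ k : ℕ, k ≤ N → σ + k * h ∈ Icc σ τ := by
    intro k hk
    constructor
    · nlinarith [Nat.cast_nonneg (α := ℝ) k]
    · have : (k:ℝ) ≤ N := Nat.cast_le.mpr hk
      have : (k:ℝ) * h ≤ N * h := by nlinarith
      have hNh : (N:ℝ) * h = τ - σ := by
        rw [hh]; field_simp
      linarith
  have hpt' : ∀ k : ℕ, k < N → σ + k * h ∈ Icc σ (τ - h) := by
    intro k hk
    have h1 := hpt k hk.le
    constructor
    · exact h1.1
    · have : (k:ℝ) + 1 ≤ N := by exact_mod_cast hk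
      have hNh : (N:ℝ) * h = τ - σ := by rw [hh]; field_simp
      nlinarith
  -- ψ is continuous on Icc σ (τ - h)
  have hNnat : 0 < N := by exact_mod_cast hN0
  have hψc : ContinuousOn ψ (Icc σ (τ - h)) := by
    apply ContinuousOn.sub
    apply ContinuousOn.sub
    · exact hφ.comp (continuous_id.add continuous_const).continuousOn
        (fun x hx => ⟨by have := hx.1; simp; linarith, by have := hx.2; simp; linarith⟩)
    · exact hφ.mono (fun x hx => ⟨hx.1, by have := hx.2; linarith⟩)
    · exact continuousOn_const
  -- telescoping sum is zero
  have hsum : ∑ k ∈ Finset.range N, ψ (σ + k * h) = 0 := by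
    have htel : ∑ k ∈ Finset.range N, (φ (σ + (k:ℝ) * h + h) - φ (σ + (k:ℝ) * h))
        = φ (σ + N * h) - φ (σ + 0 * h) := by
      have := Finset.sum_range_sub (fun k : ℕ => φ (σ + k * h)) N
      simp only [Nat.cast_add, Nat.cast_one] at this ⊢
      convert this using 2 with k
      · ring_nf
      · norm_num
    have hNh : σ + (N:ℝ) * h = τ := by rw [hh]; field_simp; ring
    simp only [hψ, Finset.sum_sub_distrib, htel, hNh, Finset.sum_const,
      Finset.card_range, nsmul_eq_mul]
    rw [hc]
    field_simp
    simp
  -- existence of nonneg and nonpos values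
  have hex_le : ∃ i ∈ Finset.range N, ψ (σ + i * h) ≤ 0 := by
    by_contra hcon
    push_neg at hcon
    have : 0 < ∑ k ∈ Finset.range N, ψ (σ + k * h) :=
      Finset.sum_pos (fun i hi => hcon i hi) ⟨0, Finset.mem_range.mpr hNnat⟩
    linarith
  have hex_ge : ∃ j ∈ Finset.range N, 0 ≤ ψ (σ + j * h) := by
    by_contra hcon
    push_neg at hcon
    have : ∑ k ∈ Finset.range N, ψ (σ + k * h) < 0 :=
      Finset.sum_neg (fun i hi => hcon i hi) ⟨0, Finset.mem_range.mpr hNnat⟩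
    linarith
  obtain ⟨i, hi, hile⟩ := hex_le
  obtain ⟨j, hj, hjge⟩ := hex_ge
  set a : ℝ := σ + i * h with ha
  set b : ℝ := σ + j * h with hb
  have hamem := hpt' i (Finset.mem_range.mp hi)
  have hbmem := hpt' j (Finset.mem_range.mp hj)
  have huIcc : uIcc a b ⊆ Icc σ (τ - h) := by
    exact Set.ordConnected_Icc.uIcc_subset hamem hbmem
  have hIVT := intermediate_value_uIcc (hψc.mono huIcc)
  have h0mem : (0:ℝ) ∈ uIcc (ψ a) (ψ b) := by
    rw [Set.mem_uIcc]
    left; exact ⟨hile, hjge⟩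
  obtain ⟨x, hx, hx0⟩ := hIVT h0mem
  have hxmem : x ∈ Icc σ (τ - h) := huIcc hx
  refine ⟨x, x + h, hxmem.1, by linarith, by have := hxmem.2; linarith, by linarith, ?_⟩
  have hφx : φ (x + h) - φ x = c := by
    have : φ (x + h) - φ x - c = 0 := hx0
    linarith
  rw [hφx, show x + h - x = h by ring, hc, hh]
  rw [div_div_div_eq]
  have hNne : (N:ℝ) ≠ 0 := ne_of_gt hN0
  have hτσne : τ - σ ≠ 0 := ne_of_gt hτσ
  field_simp
end

section
/- Let 0 < a ≤ ∞, let μ : (0,a) → ℝ be continuous with μ(s) ≤ −1 for all s ∈ (0,a), and let ψ : (0,a) → ℝ be differentiable with ψ'(s) = −(ψ(s)² + 2μ(s)ψ(s) + 1) for all s ∈ (0,a). If ψ(s₀) > 1 for some s₀ ∈ (0,a), then ψ(s) > 1 for all s ∈ [s₀, a). -/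
theorem stmt_7 (a : EReal) (ha : 0 < a) (μ ψ : ℝ → ℝ)
    (hμcont : ContinuousOn μ {s : ℝ | 0 < s ∧ (s : EReal) < a})
    (hμle : ∀ s : ℝ, 0 < s → (s : EReal) < a → μ s ≤ -1)
    (hψ : ∀ s : ℝ, 0 < s → (s : EReal) < a →
      HasDerivWithinAt ψ (-(ψ s ^ 2 + 2 * μ s * ψ s + 1))
        {x : ℝ | 0 < x ∧ (x : EReal) < a} s)
    (s₀ : ℝ) (hs₀pos : 0 < s₀) (hs₀lt : (s₀ : EReal) < a) (hψs₀ : 1 < ψ s₀) :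
    ∀ s : ℝ, s₀ ≤ s → (s : EReal) < a → 1 < ψ s := by
  set S : Set ℝ := {x : ℝ | 0 < x ∧ (x : EReal) < a} with hS
  have hSopen : IsOpen S := by
    have : S = Set.Ioi (0:ℝ) ∩ ((↑) : ℝ → EReal) ⁻¹' Set.Iio a := by
      ext x; simp [hS, Set.mem_Ioi, Set.mem_Iio]
    rw [this]
    exact isOpen_Ioi.inter (isOpen_Iio.preimage continuous_coe_real_ereal)
  have hderiv : ∀ s ∈ S, HasDerivAt ψ (-(ψ s ^ 2 + 2 * μ s * ψ s + 1)) s := by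
    intro s hs
    exact (hψ s hs.1 hs.2).hasDerivAt (hSopen.mem_nhds hs)
  intro s₁ hle hlt
  by_contra hcon
  push_neg at hcon
  -- the set of times in [s₀, s₁] where ψ ≤ 1
  have hIccS : Set.Icc s₀ s₁ ⊆ S := by
    intro t ht
    exact ⟨lt_of_lt_of_le hs₀pos ht.1,
      lt_of_le_of_lt (EReal.coe_le_coe_iff.mpr ht.2) hlt⟩
  have hψcont : ContinuousOn ψ S := fun t ht =>
    ((hderiv t ht).continuousAt).continuousWithinAt
  set K : Set ℝ := {t ∈ Set.Icc s₀ s₁ | ψ t ≤ 1} with hK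
  have hKclosed : IsClosed K := by
    have : K = Set.Icc s₀ s₁ ∩ ψ ⁻¹' Set.Iic 1 := by
      ext t; simp [hK]
    rw [this]
    exact (hψcont.mono hIccS).preimage_isClosed_of_isClosed isClosed_Icc isClosed_Iic
  have hKcomp : IsCompact K := isCompact_Icc.of_isClosed_subset hKclosed
    (fun t ht => ht.1)
  have hKne : K.Nonempty := ⟨s₁, ⟨hle, le_refl s₁⟩, hcon⟩
  set T : ℝ := sInf K with hT
  have hTK : T ∈ K := hKcomp.sInf_mem hKne
  have hTa : T ∈ Set.Icc s₀ s₁ := hTK.1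
  have hψT : ψ T ≤ 1 := hTK.2
  -- on [s₀, T), ψ > 1
  have hgt : ∀ t, s₀ ≤ t → t < T → 1 < ψ t := by
    intro t ht1 ht2
    by_contra h
    push_neg at h
    have : t ∈ K := ⟨⟨ht1, le_trans ht2.le hTa.2⟩, h⟩
    exact absurd (csInf_le hKcomp.bddBelow this) (not_le.mpr ht2)
  have hIccTS : Set.Icc s₀ T ⊆ S := fun t ht =>
    hIccS ⟨ht.1, le_trans ht.2 hTa.2⟩
  -- M : bound on ψ - 1 on [s₀, T]
  obtain ⟨x, hx, hxmax⟩ := isCompact_Icc.exists_isMaxOn ⟨s₀, le_refl s₀, hTa.1⟩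
    (hψcont.mono hIccTS)
  set M : ℝ := ψ x - 1 with hM
  -- g t = (ψ t - 1) * exp (M * t) is monotone on [s₀, T]
  set g : ℝ → ℝ := fun t => (ψ t - 1) * Real.exp (M * t) with hg
  have hgderiv : ∀ t ∈ S, HasDerivAt g
      ((-(ψ t ^ 2 + 2 * μ t * ψ t + 1)) * Real.exp (M * t)
        + (ψ t - 1) * (M * Real.exp (M * t))) t := by
    intro t ht
    have h1 : HasDerivAt (fun t => ψ t - 1) (-(ψ t ^ 2 + 2 * μ t * ψ t + 1)) t :=
      (hderiv t ht).sub_const 1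
    have h2 : HasDerivAt (fun t => Real.exp (M * t)) (M * Real.exp (M * t)) t := by
      have := ((hasDerivAt_id t).const_mul M).exp
      simpa [mul_comm] using this
    exact h1.mul h2
  have hmono : MonotoneOn g (Set.Icc s₀ T) := by
    apply monotoneOn_of_deriv_nonneg (convex_Icc s₀ T)
    · exact ((hψcont.mono hIccTS).sub continuousOn_const).mul
        (Real.continuous_exp.comp (continuous_const.mul continuous_id)).continuousOn
    · intro t ht
      rw [interior_Icc] at ht
      exact ((hgderiv t (hIccTS ⟨ht.1.le, ht.2.le⟩)).differentiableAt).differentiableWithinAt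
    · intro t ht
      rw [interior_Icc] at ht
      have htS : t ∈ S := hIccTS ⟨ht.1.le, ht.2.le⟩
      rw [(hgderiv t htS).deriv]
      have hφ : 1 < ψ t := hgt t ht.1.le ht.2
      have hμt : μ t ≤ -1 := hμle t htS.1 htS.2
      have hφM : ψ t - 1 ≤ M := by
        have : ψ t ≤ ψ x := hxmax ⟨ht.1.le, ht.2.le⟩
        simp only [hM]; linarith
      have hexp : 0 < Real.exp (M * t) := Real.exp_pos _
      have key : 0 ≤ -(ψ t ^ 2 + 2 * μ t * ψ t + 1) + (ψ t - 1) * M := by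
        nlinarith [mul_nonneg (sub_nonneg.mpr hφ.le) (sub_nonneg.mpr hφM),
          mul_nonneg (by linarith : (0:ℝ) ≤ -1 - μ t) (by linarith : (0:ℝ) ≤ ψ t)]
      nlinarith [key, hexp]
  have hgs₀ : 0 < g s₀ := by
    have : 0 < ψ s₀ - 1 := by linarith
    exact mul_pos this (Real.exp_pos _)
  have hgT : g s₀ ≤ g T := hmono ⟨le_refl s₀, hTa.1⟩ ⟨hTa.1, le_refl T⟩ hTa.1
  have : g T ≤ 0 := by
    have : ψ T - 1 ≤ 0 := by linarith
    exact mul_nonpos_of_nonpos_of_nonneg this (Real.exp_pos _).le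
  linarith
end

section
/- Let A > 0, T > A, let μ : [A,T) → ℝ satisfy μ(s) ≥ −1 + 1/A for all s ∈ [A,T), and let ψ : [A,T) → ℝ be differentiable with ψ'(s) = −(ψ(s)² + 2μ(s)ψ(s) + 1) and ψ(s) > 1 for all s ∈ [A,T). Then T ≤ A + (A/2)·(ψ(A) − 1). In particular, a solution with ψ > 1 cannot exist on all of [A,∞) when μ ≥ −1 + 1/A there. -/
open Set

theorem stmt_8 (A T : ℝ) (hA : 0 < A) (hT : A < T) (μ ψ : ℝ → ℝ)
    (hμ : ∀ s ∈ Ico A T, -1 + 1 / A ≤ μ s)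
    (hψ : ∀ s ∈ Ico A T,
      HasDerivWithinAt ψ (-(ψ s ^ 2 + 2 * μ s * ψ s + 1)) (Ico A T) s)
    (hψ1 : ∀ s ∈ Ico A T, 1 < ψ s) :
    T ≤ A + (A / 2) * (ψ A - 1) := by
  -- the auxiliary function g s = ψ s + (2/A) s
  set g : ℝ → ℝ := fun s => ψ s + (2 / A) * s with hg
  have hgderiv : ∀ s ∈ Ico A T,
      HasDerivWithinAt g (-(ψ s ^ 2 + 2 * μ s * ψ s + 1) + 2 / A) (Ico A T) s := by
    intro s hs
    exact (hψ s hs).add ((hasDerivWithinAt_id s _).const_mul (2 / A) |>.congr_deriv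
      (by ring))
  -- the key pointwise inequality: ψ'(s) + 2/A ≤ 0
  have hkey : ∀ s ∈ Ico A T, -(ψ s ^ 2 + 2 * μ s * ψ s + 1) + 2 / A ≤ 0 := by
    intro s hs
    have h1 : 1 < ψ s := hψ1 s hs
    have h2 : -1 + 1 / A ≤ μ s := hμ s hs
    have h3 : (1 / A) * ψ s ≤ (1 + μ s) * ψ s :=
      mul_le_mul_of_nonneg_right (by linarith) (by linarith)
    have h0 : 0 < 1 / A := by positivity
    have h4 : 1 / A ≤ (1 / A) * ψ s := by nlinarith
    have h5 : 2 / A = 2 * (1 / A) := by ring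
    nlinarith [sq_nonneg (ψ s - 1)]
  have hcont : ContinuousOn g (Ico A T) := fun s hs =>
    (hgderiv s hs).continuousWithinAt
  have hanti : AntitoneOn g (Ico A T) := by
    apply antitoneOn_of_hasDerivWithinAt_nonpos (convex_Ico A T) hcont
      (f' := fun s => -(ψ s ^ 2 + 2 * μ s * ψ s + 1) + 2 / A)
    · intro x hx
      rw [interior_Ico] at hx
      exact (hgderiv x ⟨le_of_lt hx.1, hx.2⟩).mono (by rw [interior_Ico]; exact Ioo_subset_Ico_self)
    · intro x hx
      rw [interior_Ico] at hx
      exact hkey x ⟨le_of_lt hx.1, hx.2⟩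
  -- every s ∈ [A,T) satisfies s ≤ A + (A/2)(ψ A − 1)
  have hbound : ∀ s ∈ Ico A T, s ≤ A + (A / 2) * (ψ A - 1) := by
    intro s hs
    have hA' : A ∈ Ico A T := ⟨le_refl A, hT⟩
    have hgs : ψ s + (2 / A) * s ≤ ψ A + (2 / A) * A := hanti hA' hs hs.1
    have h1 : 1 < ψ s := hψ1 s hs
    have h6 : (2 / A) * (s - A) ≤ ψ A - 1 := by nlinarith
    have h7 : s - A ≤ (A / 2) * (ψ A - 1) := by
      have := mul_le_mul_of_nonneg_left h6 (le_of_lt (half_pos hA))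
      have hid : (A / 2) * ((2 / A) * (s - A)) = s - A := by field_simp
      linarith [hid ▸ this]
    linarith
  by_contra h
  push_neg at h
  have h1A : 1 < ψ A := hψ1 A ⟨le_refl A, hT⟩
  have hAB : A < A + (A / 2) * (ψ A - 1) := by nlinarith
  have hs : (A + (A / 2) * (ψ A - 1) + T) / 2 ∈ Ico A T := ⟨by linarith, by linarith⟩
  have := hbound _ hs
  linarith
end

section
/- Let a > 0 and let m : [0,a] → ℝ be continuous with m > 0. Then the infimum over all continuously differentiable u : [0,a] → ℝ with u(0) = 0 and u(a) = 1 of ∫₀ᵃ max(u'(s)² − u(s)², 0) · m(s)² ds is at most ( ∫₀ᵃ m(s)⁻² ds )⁻¹. -/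
open Set intervalIntegral MeasureTheory

theorem stmt_11 (a : ℝ) (ha : 0 < a) (m : ℝ → ℝ)
    (hm : ContinuousOn m (Icc 0 a))
    (hmpos : ∀ s ∈ Icc (0 : ℝ) a, 0 < m s) :
    sInf {I : ℝ | ∃ u u' : ℝ → ℝ,
        (∀ s ∈ Icc (0 : ℝ) a, HasDerivWithinAt u (u' s) (Icc 0 a) s) ∧
        ContinuousOn u' (Icc 0 a) ∧ u 0 = 0 ∧ u a = 1 ∧
        I = ∫ s in (0 : ℝ)..a, max (u' s ^ 2 - u s ^ 2) 0 * m s ^ 2}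
      ≤ (∫ s in (0 : ℝ)..a, (m s ^ 2)⁻¹)⁻¹ := by
  set g : ℝ → ℝ := fun s => (m s ^ 2)⁻¹ with hg_def
  have hg : ContinuousOn g (Icc 0 a) := by
    apply ContinuousOn.inv₀ (hm.pow 2)
    intro x hx
    exact pow_ne_zero 2 (hmpos x hx).ne'
  set M : ℝ := ∫ s in (0:ℝ)..a, g s with hM_def
  have hgi : IntervalIntegrable g volume 0 a := by
    exact ContinuousOn.intervalIntegrable (by rwa [uIcc_of_le ha.le])
  have hM : 0 < M := by
    apply intervalIntegral.intervalIntegral_pos_of_pos_on hgi _ ha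
    intro x hx
    exact inv_pos.mpr (pow_pos (hmpos x (Ioo_subset_Icc_self hx)) 2)
  set u : ℝ → ℝ := fun x => (∫ t in (0:ℝ)..x, g t) / M with hu_def
  set u' : ℝ → ℝ := fun x => g x / M with hu'_def
  -- derivative claim
  have hderiv : ∀ s ∈ Icc (0:ℝ) a, HasDerivWithinAt u (u' s) (Icc 0 a) s := by
    intro s hs
    haveI : Fact (s ∈ Icc (0:ℝ) a) := ⟨hs⟩
    have hfi : IntervalIntegrable g volume 0 s := by
      apply hg.mono _ |>.intervalIntegrable
      rw [uIcc_of_le hs.1]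
      exact Icc_subset_Icc le_rfl hs.2
    have hmeas : StronglyMeasurableAtFilter g (nhdsWithin s (Icc 0 a)) :=
      hg.stronglyMeasurableAtFilter_nhdsWithin measurableSet_Icc s
    have : HasDerivWithinAt (fun x => ∫ t in (0:ℝ)..x, g t) (g s) (Icc 0 a) s :=
      intervalIntegral.integral_hasDerivWithinAt_right hfi hmeas (hg.continuousWithinAt hs)
    exact this.div_const M
  have hcont' : ContinuousOn u' (Icc 0 a) := hg.div_const M
  -- membership
  have hmem : (∫ s in (0:ℝ)..a, max (u' s ^ 2 - u s ^ 2) 0 * m s ^ 2) ∈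
      {I : ℝ | ∃ u u' : ℝ → ℝ,
        (∀ s ∈ Icc (0 : ℝ) a, HasDerivWithinAt u (u' s) (Icc 0 a) s) ∧
        ContinuousOn u' (Icc 0 a) ∧ u 0 = 0 ∧ u a = 1 ∧
        I = ∫ s in (0 : ℝ)..a, max (u' s ^ 2 - u s ^ 2) 0 * m s ^ 2} := by
    refine ⟨u, u', hderiv, hcont', ?_, ?_, rfl⟩
    · simp [hu_def]
    · simp only [hu_def]
      rw [← hM_def, div_self hM.ne']
  -- bounded below by 0
  have hbdd : BddBelow {I : ℝ | ∃ u u' : ℝ → ℝ,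
        (∀ s ∈ Icc (0 : ℝ) a, HasDerivWithinAt u (u' s) (Icc 0 a) s) ∧
        ContinuousOn u' (Icc 0 a) ∧ u 0 = 0 ∧ u a = 1 ∧
        I = ∫ s in (0 : ℝ)..a, max (u' s ^ 2 - u s ^ 2) 0 * m s ^ 2} := by
    refine ⟨0, ?_⟩
    rintro I ⟨v, v', _, _, _, _, rfl⟩
    apply intervalIntegral.integral_nonneg ha.le
    intro x hx
    exact mul_nonneg (le_max_right _ _) (sq_nonneg _)
  -- bound the witness integral
  have hle : (∫ s in (0:ℝ)..a, max (u' s ^ 2 - u s ^ 2) 0 * m s ^ 2) ≤ M⁻¹ := by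
    have hcontu : ContinuousOn u (Icc 0 a) := fun s hs =>
      (hderiv s hs).continuousWithinAt
    have hint1 : IntervalIntegrable (fun s => max (u' s ^ 2 - u s ^ 2) 0 * m s ^ 2)
        volume 0 a := by
      apply ContinuousOn.intervalIntegrable
      rw [uIcc_of_le ha.le]
      exact (((hcont'.pow 2).sub (hcontu.pow 2)).sup continuousOn_const).mul (hm.pow 2)
    have hint2 : IntervalIntegrable (fun s => u' s ^ 2 * m s ^ 2) volume 0 a := by
      apply ContinuousOn.intervalIntegrable
      rw [uIcc_of_le ha.le]
      exact (hcont'.pow 2).mul (hm.pow 2)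
    have step1 : (∫ s in (0:ℝ)..a, max (u' s ^ 2 - u s ^ 2) 0 * m s ^ 2) ≤
        ∫ s in (0:ℝ)..a, u' s ^ 2 * m s ^ 2 := by
      apply intervalIntegral.integral_mono_on ha.le hint1 hint2
      intro x _
      apply mul_le_mul_of_nonneg_right _ (sq_nonneg _)
      exact max_le (sub_le_self _ (sq_nonneg _)) (sq_nonneg _)
    have step2 : (∫ s in (0:ℝ)..a, u' s ^ 2 * m s ^ 2) = M⁻¹ := by
      have : (∫ s in (0:ℝ)..a, u' s ^ 2 * m s ^ 2) =
          ∫ s in (0:ℝ)..a, g s / M ^ 2 := by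
        apply intervalIntegral.integral_congr
        intro x hx
        rw [uIcc_of_le ha.le] at hx
        have hmx : m x ^ 2 ≠ 0 := pow_ne_zero 2 (hmpos x hx).ne'
        simp only [hu'_def, hg_def]
        field_simp
      rw [this, intervalIntegral.integral_div, ← hM_def, pow_two, ← div_div,
        div_self hM.ne', one_div]
    linarith
  exact csInf_le_of_le hbdd hmem hle
end

section
/- Let I ⊆ ℝ be an open interval, let m : I → ℝ be continuously differentiable with m > 0, set μ = m'/m, and let ψ : I → ℝ be differentiable with ψ'(s) = −(ψ(s)² + 2μ(s)ψ(s) + 1) for all s ∈ I. Define Θ : I → ℝ by Θ(a) = e^{2a} · m(a)² · ψ(a). Then Θ'(a) = −e^{2a} · m(a)² · (ψ(a) − 1)² for all a ∈ I; in particular Θ is nonincreasing on I. -/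
theorem stmt_12 (I : Set ℝ) (hIopen : IsOpen I) (hIconv : Convex ℝ I)
    (m m' μ ψ : ℝ → ℝ)
    (hm : ∀ s ∈ I, HasDerivAt m (m' s) s)
    (hm'c : ContinuousOn m' I)
    (hmpos : ∀ s ∈ I, 0 < m s)
    (hμ : ∀ s ∈ I, μ s = m' s / m s)
    (hψ : ∀ s ∈ I, HasDerivAt ψ (-(ψ s ^ 2 + 2 * μ s * ψ s + 1)) s) :
    (∀ a ∈ I, HasDerivAt (fun x => Real.exp (2 * x) * m x ^ 2 * ψ x)
        (-(Real.exp (2 * a) * m a ^ 2 * (ψ a - 1) ^ 2)) a) ∧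
    AntitoneOn (fun x => Real.exp (2 * x) * m x ^ 2 * ψ x) I := by
  have key : ∀ a ∈ I, HasDerivAt (fun x => Real.exp (2 * x) * m x ^ 2 * ψ x)
      (-(Real.exp (2 * a) * m a ^ 2 * (ψ a - 1) ^ 2)) a := by
    intro a ha
    have he : HasDerivAt (fun x => Real.exp (2 * x)) (Real.exp (2 * a) * 2) a :=
      HasDerivAt.exp (by simpa using (hasDerivAt_id a).const_mul 2)
    have hm2 : HasDerivAt (fun x => m x ^ 2) ((2 : ℕ) * m a ^ 1 * m' a) a := (hm a ha).pow 2
    have hprod := ((he.mul hm2).mul (hψ a ha))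
    convert hprod using 1
    · rfl
    · rfl
    · rfl
    have hμa := hμ a ha
    have hma := (hmpos a ha).ne'
    simp only [hμa, Pi.mul_apply]
    field_simp
    ring
  refine ⟨key, ?_⟩
  have hdiff : ∀ a ∈ I, DifferentiableAt ℝ (fun x => Real.exp (2 * x) * m x ^ 2 * ψ x) a :=
    fun a ha => (key a ha).differentiableAt
  apply AntitoneOn.mono (s := I) ?_ le_rfl
  have hint : interior I = I := hIopen.interior_eq
  apply antitoneOn_of_deriv_nonpos hIconv
  · exact fun a ha => (hdiff a ha).continuousAt.continuousWithinAt
  · rw [hint]; exact fun a ha => (hdiff a ha).differentiableWithinAt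
  · rw [hint]
    intro a ha
    rw [deriv_eqOn hIopen (fun x hx => (key x hx).hasDerivWithinAt) ha]
    show -(Real.exp (2 * a) * m a ^ 2 * (ψ a - 1) ^ 2) ≤ 0
    have : (0:ℝ) ≤ Real.exp (2 * a) * m a ^ 2 * (ψ a - 1) ^ 2 := by positivity
    linarith
end

section
/- Let b > 0, let m : [0,b] → ℝ be continuously differentiable with m > 0, and let θ : [0,b] → ℝ be continuously differentiable with |θ'(s)| ≤ θ(s) for all s ∈ [0,b], θ(b) = 1, and θ² − θ'² not identically zero on [0,b]. For v : [0,b] → ℝ continuously differentiable with v(0) = 0, v(b) = 1 and 0 ≤ v(s) ≤ v'(s) on [0,b], set K(v) = ( ∫₀ᵇ (v'(s)² − v(s)²) m(s)² ds )^{1/2} / ∫₀ᵇ (θ(s)² − θ'(s)²)^{1/2} (v'(s)² − v(s)²)^{1/2} ds. Then the infimum of K(v) over all such v equals ( ∫₀ᵇ (θ(s)² − θ'(s)²) m(s)⁻² ds )^{−1/2}. -/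
open Set MeasureTheory intervalIntegral
open scoped ENNReal NNReal

private lemma pos_integral_of_pos_at {a b : ℝ} {f : ℝ → ℝ} (hab : a < b)
    (hf : ContinuousOn f (Icc a b)) (h0 : ∀ s ∈ Icc a b, 0 ≤ f s)
    {s₀ : ℝ} (hs₀ : s₀ ∈ Icc a b) (hpos : 0 < f s₀) :
    0 < ∫ s in a..b, f s := by
  have hfi : IntervalIntegrable f volume a b :=
    (hf.mono (uIcc_of_le hab.le).subset).intervalIntegrable
  have hae : 0 ≤ᵐ[volume.restrict (Set.uIoc a b)] f := by
    rw [uIoc_of_le hab.le, Filter.EventuallyLE, ae_restrict_iff' measurableSet_Ioc]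
    exact Filter.Eventually.of_forall fun x hx => h0 x (Ioc_subset_Icc_self hx)
  rw [integral_pos_iff_support_of_nonneg_ae' hae hfi]
  refine ⟨hab, ?_⟩
  -- find a small interval where f is positive
  have hcw : ContinuousWithinAt f (Icc a b) s₀ := hf s₀ hs₀
  have hmem : f ⁻¹' Ioi 0 ∈ nhdsWithin s₀ (Icc a b) :=
    hcw (Ioi_mem_nhds hpos)
  rw [mem_nhdsWithin] at hmem
  obtain ⟨U, hUopen, hs₀U, hU⟩ := hmem
  obtain ⟨δ, hδ, hball⟩ := Metric.isOpen_iff.1 hUopen s₀ hs₀U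
  set c := max a (s₀ - δ/2) with hc
  set d := min b (s₀ + δ/2) with hd
  have hcd : c < d := by
    rw [hc, hd]
    apply max_lt <;> apply lt_min
    · exact hab
    · linarith [hs₀.1]
    · linarith [hs₀.2]
    · linarith
  have hsub : Ioo c d ⊆ Function.support f ∩ Ioc a b := by
    intro x hx
    have hxI : x ∈ Icc a b :=
      ⟨le_trans (le_max_left _ _) hx.1.le, le_trans hx.2.le (min_le_left _ _)⟩
    have hxU : x ∈ U := by
      apply hball
      rw [Metric.mem_ball, Real.dist_eq, abs_lt]
      constructor
      · have := hx.1; have := le_max_right a (s₀ - δ/2); linarith [lt_of_le_of_lt (le_max_right a (s₀ - δ/2)) hx.1]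
      · have := lt_of_lt_of_le hx.2 (min_le_right b (s₀ + δ/2)); linarith
    have : f x ∈ Ioi (0:ℝ) := hU ⟨hxU, hxI⟩
    exact ⟨ne_of_gt this, ⟨lt_of_le_of_lt (le_max_left _ _) hx.1, le_trans hx.2.le (min_le_left _ _)⟩⟩
  calc (0:ℝ≥0∞) < volume (Ioo c d) := by simp [Real.volume_Ioo, hcd]
    _ ≤ volume (Function.support f ∩ Ioc a b) := measure_mono hsub

private lemma cs_integral {a b : ℝ} (hab : a ≤ b) {F G : ℝ → ℝ}
    (hF : ContinuousOn F (Icc a b)) (hG : ContinuousOn G (Icc a b)) :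
    (∫ s in a..b, F s * G s) ^ 2 ≤ (∫ s in a..b, F s ^ 2) * (∫ s in a..b, G s ^ 2) := by
  have hu : uIcc a b = Icc a b := uIcc_of_le hab
  have hF2 : IntervalIntegrable (fun s => F s ^ 2) volume a b :=
    ((hF.pow 2).mono hu.subset).intervalIntegrable
  have hG2 : IntervalIntegrable (fun s => G s ^ 2) volume a b :=
    ((hG.pow 2).mono hu.subset).intervalIntegrable
  have hFG : IntervalIntegrable (fun s => F s * G s) volume a b :=
    ((hF.mul hG).mono hu.subset).intervalIntegrable
  have key : ∀ lam : ℝ,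
      0 ≤ (∫ s in a..b, G s ^ 2) * (lam * lam) + (2 * ∫ s in a..b, F s * G s) * lam
            + (∫ s in a..b, F s ^ 2) := by
    intro lam
    have expand : ∀ s : ℝ, (lam * G s + F s) ^ 2
        = lam * lam * G s ^ 2 + 2 * lam * (F s * G s) + F s ^ 2 := by intro s; ring
    have hnn : 0 ≤ ∫ s in a..b, (lam * G s + F s) ^ 2 :=
      intervalIntegral.integral_nonneg hab fun u _ => sq_nonneg _
    have : (∫ s in a..b, (lam * G s + F s) ^ 2)
        = lam * lam * (∫ s in a..b, G s ^ 2) + 2 * lam * (∫ s in a..b, F s * G s)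
            + (∫ s in a..b, F s ^ 2) := by
      simp_rw [expand]
      rw [intervalIntegral.integral_add ((hG2.const_mul _).add (hFG.const_mul _)) hF2,
        intervalIntegral.integral_add (hG2.const_mul _) (hFG.const_mul _),
        intervalIntegral.integral_const_mul, intervalIntegral.integral_const_mul]
    rw [this] at hnn
    linarith
  have hd := discrim_le_zero key
  rw [discrim] at hd
  nlinarith [hd]

private lemma sqrt_sq_add_le {c : ℝ} (hc : 0 ≤ c) (y z : ℝ) :
    Real.sqrt (y ^ 2 + c) ≤ Real.sqrt (z ^ 2 + c) + |y - z| := by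
  have hz : |z| ≤ Real.sqrt (z ^ 2 + c) := by
    rw [← Real.sqrt_sq_eq_abs]
    exact Real.sqrt_le_sqrt (by linarith)
  have hznn : 0 ≤ Real.sqrt (z ^ 2 + c) := Real.sqrt_nonneg _
  have habs : |y| ≤ |z| + |y - z| := by
    calc |y| = |z + (y - z)| := by ring_nf
      _ ≤ |z| + |y - z| := abs_add_le _ _
  have hsq : y ^ 2 + c ≤ (Real.sqrt (z ^ 2 + c) + |y - z|) ^ 2 := by
    have h1 : Real.sqrt (z ^ 2 + c) ^ 2 = z ^ 2 + c := Real.sq_sqrt (by positivity)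
    nlinarith [abs_nonneg (y - z), abs_nonneg z, abs_nonneg y, sq_abs y, sq_abs z]
  calc Real.sqrt (y ^ 2 + c) ≤ Real.sqrt ((Real.sqrt (z ^ 2 + c) + |y - z|) ^ 2) :=
        Real.sqrt_le_sqrt hsq
    _ = Real.sqrt (z ^ 2 + c) + |y - z| := Real.sqrt_sq (by positivity)

private lemma lipschitz_sqrt_sq_add {c : ℝ} (hc : 0 ≤ c) :
    LipschitzWith 1 (fun y : ℝ => Real.sqrt (y ^ 2 + c)) := by
  apply LipschitzWith.of_dist_le_mul
  intro y z
  rw [Real.dist_eq, Real.dist_eq, NNReal.coe_one, one_mul, abs_le]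
  constructor
  · have := sqrt_sq_add_le hc z y
    rw [abs_sub_comm] at this
    linarith
  · linarith [sqrt_sq_add_le hc y z]

private lemma field_id1 {A P c : ℝ} (hP : P ≠ 0) (hc : c ≠ 0) :
    A / P ^ 2 / c * P = A * P⁻¹ * c⁻¹ := by
  field_simp

private lemma field_id2 {x P c A : ℝ} (h1 : x * x = A) (hP : P ≠ 0) (hc : c ≠ 0) :
    x * (x / P / c) = A * P⁻¹ * c⁻¹ := by
  rw [← h1]
  field_simp

private lemma field_id3 {s c : ℝ} (hs : s ≠ 0) (hc : c ≠ 0) :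
    s * c / (s * s * c) = s⁻¹ := by
  field_simp

private lemma field_id4 {s c I : ℝ} (hs : s ≠ 0) (hc : c ≠ 0) (hI : I = s * s) :
    s * c / (I * c) = s⁻¹ := by
  rw [hI]
  exact field_id3 hs hc
theorem stmt_16 (b : ℝ) (hb : 0 < b) (m m' θ θ' : ℝ → ℝ)
    (hm : ∀ s ∈ Icc (0 : ℝ) b, HasDerivWithinAt m (m' s) (Icc 0 b) s)
    (hm'c : ContinuousOn m' (Icc 0 b))
    (hmpos : ∀ s ∈ Icc (0 : ℝ) b, 0 < m s)
    (hθ : ∀ s ∈ Icc (0 : ℝ) b, HasDerivWithinAt θ (θ' s) (Icc 0 b) s)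
    (hθ'c : ContinuousOn θ' (Icc 0 b))
    (hθbd : ∀ s ∈ Icc (0 : ℝ) b, |θ' s| ≤ θ s)
    (hθb : θ b = 1)
    (hne : ∃ s ∈ Icc (0 : ℝ) b, θ s ^ 2 - θ' s ^ 2 ≠ 0) :
    (⨅ v : {p : (ℝ → ℝ) × (ℝ → ℝ) //
        (∀ s ∈ Icc (0 : ℝ) b, HasDerivWithinAt p.1 (p.2 s) (Icc 0 b) s) ∧
        ContinuousOn p.2 (Icc 0 b) ∧ p.1 0 = 0 ∧ p.1 b = 1 ∧
        (∀ s ∈ Icc (0 : ℝ) b, 0 ≤ p.1 s ∧ p.1 s ≤ p.2 s)},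
      ENNReal.ofReal
          (Real.sqrt (∫ s in (0 : ℝ)..b, (v.1.2 s ^ 2 - v.1.1 s ^ 2) * m s ^ 2)) /
        ENNReal.ofReal
          (∫ s in (0 : ℝ)..b,
            Real.sqrt (θ s ^ 2 - θ' s ^ 2) * Real.sqrt (v.1.2 s ^ 2 - v.1.1 s ^ 2)))
    = ENNReal.ofReal
        ((Real.sqrt (∫ s in (0 : ℝ)..b, (θ s ^ 2 - θ' s ^ 2) * (m s ^ 2)⁻¹))⁻¹) := by
  have hb' : (0:ℝ) ≤ b := hb.le
  have hu : uIcc (0:ℝ) b = Icc 0 b := uIcc_of_le hb'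
  have hmc : ContinuousOn m (Icc 0 b) := fun s hs => (hm s hs).continuousWithinAt
  have hθc : ContinuousOn θ (Icc 0 b) := fun s hs => (hθ s hs).continuousWithinAt
  have hmne : ∀ s ∈ Icc (0:ℝ) b, m s ≠ 0 := fun s hs => (hmpos s hs).ne'
  have hgap : ∀ s ∈ Icc (0:ℝ) b, 0 ≤ θ s ^ 2 - θ' s ^ 2 := by
    intro s hs
    have h1 := hθbd s hs
    have h2 := abs_nonneg (θ' s)
    nlinarith [sq_abs (θ' s)]
  have hWc : ContinuousOn (fun s => (θ s ^ 2 - θ' s ^ 2) * (m s ^ 2)⁻¹) (Icc 0 b) :=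
    ((hθc.pow 2).sub (hθ'c.pow 2)).mul
      (((hmc.pow 2)).inv₀ fun s hs => pow_ne_zero 2 (hmne s hs))
  set Iinf := ∫ s in (0:ℝ)..b, (θ s ^ 2 - θ' s ^ 2) * (m s ^ 2)⁻¹ with hIinf_def
  obtain ⟨s₀, hs₀I, hs₀⟩ := hne
  have hs₀pos : 0 < θ s₀ ^ 2 - θ' s₀ ^ 2 := lt_of_le_of_ne (hgap s₀ hs₀I) (Ne.symm hs₀)
  have hIpos : 0 < Iinf := by
    refine pos_integral_of_pos_at hb hWc
      (fun s hs => mul_nonneg (hgap s hs) (by positivity)) hs₀I ?_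
    have := hmpos s₀ hs₀I
    positivity
  have hHc : ContinuousOn (fun s => Real.sqrt (θ s ^ 2 - θ' s ^ 2)) (Icc 0 b) :=
    Real.continuous_sqrt.comp_continuousOn ((hθc.pow 2).sub (hθ'c.pow 2))
  refine le_antisymm ?_ ?_
  · -- upper bound : exhibit the minimizer
    set q : ℝ → ℝ := fun s => Real.sqrt (θ s ^ 2 - θ' s ^ 2) / m s ^ 2 with hq_def
    have hqc : ContinuousOn q (Icc 0 b) :=
      hHc.div (hmc.pow 2) fun s hs => pow_ne_zero 2 (hmne s hs)
    have hqnn : ∀ s ∈ Icc (0:ℝ) b, 0 ≤ q s := by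
      intro s hs
      have h1 := hmpos s hs
      have h2 := Real.sqrt_nonneg (θ s ^ 2 - θ' s ^ 2)
      rw [hq_def]
      positivity
    obtain ⟨Qb, hQb⟩ := isCompact_Icc.exists_bound_of_continuousOn hqc
    have hQb' : ∀ s ∈ Icc (0:ℝ) b, q s ≤ Qb := by
      intro s hs
      have h1 := hQb s hs
      rw [Real.norm_eq_abs] at h1
      exact (le_abs_self _).trans h1
    have hQb0 : 0 ≤ Qb := (norm_nonneg _).trans (hQb 0 ⟨le_refl 0, hb'⟩)
    set M := (Qb + 1) * Real.exp b with hM_def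
    have hM0 : 0 < M := by rw [hM_def]; positivity
    set vf : ℝ → ℝ → ℝ := fun t x => Real.sqrt ((min |x| M) ^ 2 + q t ^ 2) with hvf_def
    have hvfnn : ∀ t x, 0 ≤ vf t x := fun t x => Real.sqrt_nonneg _
    have hpl : IsPicardLindelof vf (⟨0, le_refl 0, hb'⟩ : Icc (0:ℝ) b) 0
        ⟨(M + Qb) * b, by positivity⟩ 0 ⟨M + Qb, by positivity⟩ 1 :=
      { lipschitzOnWith := by
          intro t _
          apply LipschitzWith.lipschitzOnWith
          have h1 : LipschitzWith 1 fun y : ℝ => Real.sqrt (y ^ 2 + q t ^ 2) :=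
            lipschitz_sqrt_sq_add (sq_nonneg _)
          have h2 : LipschitzWith 1 fun x : ℝ => min |x| M := by
            have h3 := (lipschitzWith_one_norm (E := ℝ)).min_const M
            simpa [Real.norm_eq_abs] using h3
          have h4 := h1.comp h2
          norm_num at h4
          exact h4
        continuousOn := by
          intro x _
          simp only [hvf_def]
          exact Real.continuous_sqrt.comp_continuousOn
            (continuousOn_const.add (hqc.pow 2))
        norm_le := by
          intro t ht x _
          rw [Real.norm_eq_abs, abs_of_nonneg (Real.sqrt_nonneg _)]
          have hmn : 0 ≤ min |x| M := le_min (abs_nonneg x) hM0.le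
          have h1 : (min |x| M) ^ 2 ≤ M ^ 2 := by nlinarith [min_le_right |x| M]
          have h2 : q t ^ 2 ≤ Qb ^ 2 := by nlinarith [hqnn t ht, hQb' t ht]
          calc Real.sqrt ((min |x| M) ^ 2 + q t ^ 2) ≤ Real.sqrt ((M + Qb) ^ 2) :=
                Real.sqrt_le_sqrt (by nlinarith)
            _ = M + Qb := Real.sqrt_sq (by positivity)
        mul_max_le := by
          simp only [NNReal.coe_mk, NNReal.coe_zero, sub_zero, max_eq_left hb']
          exact le_rfl }
    obtain ⟨w, hw0', hwd⟩ := hpl.exists_eq_forall_mem_Icc_hasDerivWithinAt₀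
    have hw0 : w 0 = 0 := hw0'
    have hwc : ContinuousOn w (Icc 0 b) := fun s hs => (hwd s hs).continuousWithinAt
    have hwIci : ∀ t ∈ Ico (0:ℝ) b, HasDerivWithinAt w (vf t (w t)) (Ici t) t :=
      fun t ht => (hwd t ⟨ht.1, ht.2.le⟩).mono_of_mem_nhdsWithin (Icc_mem_nhdsGE_of_mem ht)
    have hbnd : ∀ t ∈ Ico (0:ℝ) b, ‖vf t (w t)‖ ≤ 1 * ‖w t‖ + Qb := by
      intro t ht
      have htI : t ∈ Icc (0:ℝ) b := ⟨ht.1, ht.2.le⟩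
      rw [Real.norm_eq_abs, Real.norm_eq_abs, abs_of_nonneg (hvfnn _ _)]
      simp only [hvf_def]
      have hq2 : q t ^ 2 ≤ Qb ^ 2 := by nlinarith [hqnn t htI, hQb' t htI]
      have hmn : 0 ≤ min |w t| M := le_min (abs_nonneg _) hM0.le
      have hmle : min |w t| M ≤ |w t| := min_le_left _ _
      calc Real.sqrt ((min |w t| M) ^ 2 + q t ^ 2) ≤ Real.sqrt ((|w t| + Qb) ^ 2) :=
            Real.sqrt_le_sqrt (by nlinarith [abs_nonneg (w t), hqnn t htI])
        _ = |w t| + Qb := Real.sqrt_sq (by positivity)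
        _ = 1 * |w t| + Qb := by ring
    have hwbd : ∀ t ∈ Icc (0:ℝ) b, |w t| < M := by
      have hgr := norm_le_gronwallBound_of_norm_deriv_right_le (δ := 0) hwc hwIci
        (by rw [Real.norm_eq_abs, hw0]; simp) hbnd
      intro t ht
      have h1 := hgr t ht
      rw [gronwallBound_of_K_ne_0 one_ne_zero, Real.norm_eq_abs] at h1
      have h2 : Real.exp (1 * (t - 0)) ≤ Real.exp b := by
        rw [Real.exp_le_exp]; linarith [ht.2]
      have h3 : (0:ℝ) < Real.exp (1 * (t - 0)) := Real.exp_pos _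
      have h4 : (0:ℝ) < Real.exp b := Real.exp_pos b
      rw [hM_def]
      calc |w t| ≤ 0 * Real.exp (1 * (t - 0)) + Qb / 1 * (Real.exp (1 * (t - 0)) - 1) := h1
        _ = Qb * (Real.exp (1 * (t - 0)) - 1) := by ring
        _ ≤ Qb * Real.exp b := by nlinarith
        _ < (Qb + 1) * Real.exp b := by nlinarith
    have hW'eq : ∀ t ∈ Icc (0:ℝ) b, vf t (w t) = Real.sqrt (w t ^ 2 + q t ^ 2) := by
      intro t ht
      simp only [hvf_def]
      rw [min_eq_left (hwbd t ht).le, sq_abs]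
    have hWsq : ∀ t ∈ Icc (0:ℝ) b, vf t (w t) ^ 2 = w t ^ 2 + q t ^ 2 := by
      intro t ht
      rw [hW'eq t ht, Real.sq_sqrt (by positivity)]
    have hwleW : ∀ t ∈ Icc (0:ℝ) b, w t ≤ vf t (w t) := by
      intro t ht
      rw [hW'eq t ht]
      calc w t ≤ |w t| := le_abs_self _
        _ = Real.sqrt (w t ^ 2) := (Real.sqrt_sq_eq_abs _).symm
        _ ≤ _ := Real.sqrt_le_sqrt (by nlinarith [sq_nonneg (q t)])
    have hqleW : ∀ t ∈ Icc (0:ℝ) b, q t ≤ vf t (w t) := by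
      intro t ht
      rw [hW'eq t ht]
      calc q t ≤ |q t| := le_abs_self _
        _ = Real.sqrt (q t ^ 2) := (Real.sqrt_sq_eq_abs _).symm
        _ ≤ _ := Real.sqrt_le_sqrt (by nlinarith [sq_nonneg (w t)])
    have hW'c : ContinuousOn (fun s => vf s (w s)) (Icc 0 b) := by
      simp only [hvf_def]
      exact Real.continuous_sqrt.comp_continuousOn
        ((((continuous_min.comp_continuousOn (hwc.abs.prodMk continuousOn_const))).pow 2).add
          (hqc.pow 2))
    have hFTC : ∀ t ∈ Icc (0:ℝ) b, w t = ∫ s in (0:ℝ)..t, vf s (w s) := by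
      intro t ht
      have hsub : Icc (0:ℝ) t ⊆ Icc 0 b := Icc_subset_Icc le_rfl ht.2
      have h1 : (∫ s in (0:ℝ)..t, vf s (w s)) = w t - w 0 := by
        refine integral_eq_sub_of_hasDeriv_right_of_le ht.1 (hwc.mono hsub) ?_ ?_
        · intro x hx
          have hxI : x ∈ Ico (0:ℝ) b := ⟨hx.1.le, lt_of_lt_of_le hx.2 ht.2⟩
          exact (hwd x ⟨hxI.1, hxI.2.le⟩).mono_of_mem_nhdsWithin (Icc_mem_nhdsGT_of_mem hxI)
        · exact ((hW'c.mono hsub).mono (uIcc_of_le ht.1).subset).intervalIntegrable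
      rw [h1, hw0, sub_zero]
    have hwnn : ∀ t ∈ Icc (0:ℝ) b, 0 ≤ w t := by
      intro t ht
      rw [hFTC t ht]
      exact intervalIntegral.integral_nonneg ht.1 fun u _ => hvfnn u (w u)
    have hqib : IntervalIntegrable q volume 0 b := (hqc.mono hu.subset).intervalIntegrable
    have hWib : IntervalIntegrable (fun s => vf s (w s)) volume 0 b :=
      (hW'c.mono hu.subset).intervalIntegrable
    have hcpos : 0 < w b := by
      rw [hFTC b ⟨hb', le_refl b⟩]
      have hqpos : 0 < ∫ s in (0:ℝ)..b, q s := by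
        refine pos_integral_of_pos_at hb hqc hqnn hs₀I ?_
        rw [hq_def]
        have h1 := hmpos s₀ hs₀I
        have h2 := Real.sqrt_pos.2 hs₀pos
        positivity
      calc (0:ℝ) < ∫ s in (0:ℝ)..b, q s := hqpos
        _ ≤ _ := intervalIntegral.integral_mono_on hb' hqib hWib fun s hs => hqleW s hs
    have hgeq : ∀ s ∈ Icc (0:ℝ) b,
        (vf s (w s) / w b) ^ 2 - (w s / w b) ^ 2 = (q s / w b) ^ 2 := by
      intro s hs
      have h1 := hWsq s hs
      rw [div_pow, div_pow, div_pow, ← sub_div, h1, add_sub_cancel_left]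
    refine iInf_le_of_le ⟨(fun u => w u / w b, fun s => vf s (w s) / w b),
      fun s hs => (hwd s hs).div_const _, hW'c.div_const _, by simp [hw0],
      div_self hcpos.ne', fun s hs => ⟨div_nonneg (hwnn s hs) hcpos.le,
        (div_le_div_iff_of_pos_right hcpos).2 (hwleW s hs)⟩⟩ ?_
    show ENNReal.ofReal (Real.sqrt (∫ s in (0:ℝ)..b,
          ((vf s (w s) / w b) ^ 2 - (w s / w b) ^ 2) * m s ^ 2)) /
        ENNReal.ofReal (∫ s in (0:ℝ)..b, Real.sqrt (θ s ^ 2 - θ' s ^ 2)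
          * Real.sqrt ((vf s (w s) / w b) ^ 2 - (w s / w b) ^ 2))
      ≤ ENNReal.ofReal (Real.sqrt Iinf)⁻¹
    have hN : (∫ s in (0:ℝ)..b, ((vf s (w s) / w b) ^ 2 - (w s / w b) ^ 2) * m s ^ 2)
        = Iinf * ((w b) ^ 2)⁻¹ := by
      rw [hIinf_def, ← intervalIntegral.integral_mul_const]
      refine intervalIntegral.integral_congr ?_
      intro s hs
      rw [hu] at hs
      dsimp only
      rw [hgeq s hs, hq_def]
      have h1 : Real.sqrt (θ s ^ 2 - θ' s ^ 2) ^ 2 = θ s ^ 2 - θ' s ^ 2 :=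
        Real.sq_sqrt (hgap s hs)
      rw [div_pow, div_pow, h1]
      exact field_id1 (pow_ne_zero 2 (hmne s hs)) (pow_ne_zero 2 hcpos.ne')
    have hD : (∫ s in (0:ℝ)..b, Real.sqrt (θ s ^ 2 - θ' s ^ 2)
          * Real.sqrt ((vf s (w s) / w b) ^ 2 - (w s / w b) ^ 2))
        = Iinf * (w b)⁻¹ := by
      rw [hIinf_def, ← intervalIntegral.integral_mul_const]
      refine intervalIntegral.integral_congr ?_
      intro s hs
      rw [hu] at hs
      dsimp only
      rw [hgeq s hs, Real.sqrt_sq (div_nonneg (hqnn s hs) hcpos.le), hq_def]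
      have h1 : Real.sqrt (θ s ^ 2 - θ' s ^ 2) * Real.sqrt (θ s ^ 2 - θ' s ^ 2)
          = θ s ^ 2 - θ' s ^ 2 := Real.mul_self_sqrt (hgap s hs)
      exact field_id2 h1 (pow_ne_zero 2 (hmne s hs)) hcpos.ne'
    rw [hN, hD]
    have h5 : Real.sqrt (Iinf * ((w b) ^ 2)⁻¹) = Real.sqrt Iinf * (w b)⁻¹ := by
      rw [Real.sqrt_mul hIpos.le, Real.sqrt_inv, Real.sqrt_sq hcpos.le]
    rw [h5, ← ENNReal.ofReal_div_of_pos (by positivity)]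
    apply le_of_eq
    congr 1
    have h6 : Iinf = Real.sqrt Iinf * Real.sqrt Iinf := (Real.mul_self_sqrt hIpos.le).symm
    have h7 : Real.sqrt Iinf ≠ 0 := (Real.sqrt_pos.2 hIpos).ne'
    exact field_id4 h7 (inv_ne_zero hcpos.ne') h6
  · -- lower bound : Cauchy-Schwarz
    refine le_iInf ?_
    rintro ⟨⟨v, v'⟩, hvd, hv'c, hv0, hvb1, hvbd⟩
    have hvc : ContinuousOn v (Icc 0 b) := fun s hs => (hvd s hs).continuousWithinAt
    have hg_nn : ∀ s ∈ Icc (0:ℝ) b, 0 ≤ v' s ^ 2 - v s ^ 2 := by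
      intro s hs
      obtain ⟨h1, h2⟩ := hvbd s hs
      nlinarith
    have hgc : ContinuousOn (fun s => v' s ^ 2 - v s ^ 2) (Icc 0 b) :=
      (hv'c.pow 2).sub (hvc.pow 2)
    show ENNReal.ofReal (Real.sqrt Iinf)⁻¹ ≤
      ENNReal.ofReal (Real.sqrt (∫ s in (0:ℝ)..b, (v' s ^ 2 - v s ^ 2) * m s ^ 2)) /
        ENNReal.ofReal (∫ s in (0:ℝ)..b,
          Real.sqrt (θ s ^ 2 - θ' s ^ 2) * Real.sqrt (v' s ^ 2 - v s ^ 2))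
    set N := ∫ s in (0:ℝ)..b, (v' s ^ 2 - v s ^ 2) * m s ^ 2 with hN_def
    set D := ∫ s in (0:ℝ)..b,
      Real.sqrt (θ s ^ 2 - θ' s ^ 2) * Real.sqrt (v' s ^ 2 - v s ^ 2) with hD_def
    have hNpos : 0 < N := by
      by_cases hex : ∃ s ∈ Icc (0:ℝ) b, v s < v' s
      · obtain ⟨s₁, hs₁I, hs₁⟩ := hex
        refine pos_integral_of_pos_at hb (hgc.mul (hmc.pow 2))
          (fun s hs => mul_nonneg (hg_nn s hs) (sq_nonneg _)) hs₁I ?_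
        have h0 := (hvbd s₁ hs₁I).1
        have h1 := hmpos s₁ hs₁I
        have h2 : 0 < v' s₁ ^ 2 - v s₁ ^ 2 := by nlinarith
        positivity
      · push_neg at hex
        exfalso
        have heq : ∀ s ∈ Icc (0:ℝ) b, v' s = v s :=
          fun s hs => le_antisymm (hex s hs) (hvbd s hs).2
        have hIci : ∀ t ∈ Ico (0:ℝ) b, HasDerivWithinAt v (v' t) (Ici t) t := fun t ht =>
          (hvd t ⟨ht.1, ht.2.le⟩).mono_of_mem_nhdsWithin (Icc_mem_nhdsGE_of_mem ht)
        have hbnd : ∀ t ∈ Ico (0:ℝ) b, ‖v' t‖ ≤ 1 * ‖v t‖ + 0 := by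
          intro t ht
          rw [heq t ⟨ht.1, ht.2.le⟩, one_mul, add_zero]
        have hv00 : v 0 = 0 := hv0
        have hgr := norm_le_gronwallBound_of_norm_deriv_right_le (δ := 0) hvc hIci
          (by rw [Real.norm_eq_abs, hv00]; simp) hbnd b ⟨hb', le_refl b⟩
        have hvb1' : v b = 1 := hvb1
        rw [gronwallBound_ε0, Real.norm_eq_abs, hvb1'] at hgr
        rw [zero_mul] at hgr
        norm_num at hgr
    have hDnn : 0 ≤ D :=
      intervalIntegral.integral_nonneg hb'
        fun s _ => mul_nonneg (Real.sqrt_nonneg _) (Real.sqrt_nonneg _)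
    have hCS : D ^ 2 ≤ Iinf * N := by
      have hFc : ContinuousOn (fun s => Real.sqrt (θ s ^ 2 - θ' s ^ 2) / m s) (Icc 0 b) :=
        hHc.div hmc hmne
      have hsg : ContinuousOn (fun s => Real.sqrt (v' s ^ 2 - v s ^ 2)) (Icc 0 b) :=
        Real.continuous_sqrt.comp_continuousOn hgc
      have hGc : ContinuousOn (fun s => Real.sqrt (v' s ^ 2 - v s ^ 2) * m s) (Icc 0 b) :=
        hsg.mul hmc
      have h := cs_integral hb' hFc hGc
      have e1 : (∫ s in (0:ℝ)..b, (Real.sqrt (θ s ^ 2 - θ' s ^ 2) / m s)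
          * (Real.sqrt (v' s ^ 2 - v s ^ 2) * m s)) = D := by
        rw [hD_def]
        refine intervalIntegral.integral_congr ?_
        intro s hs
        rw [hu] at hs
        dsimp only
        rw [div_mul_eq_mul_div, mul_div_assoc, mul_div_cancel_right₀ _ (hmne s hs)]
      have e2 : (∫ s in (0:ℝ)..b, (Real.sqrt (θ s ^ 2 - θ' s ^ 2) / m s) ^ 2) = Iinf := by
        rw [hIinf_def]
        refine intervalIntegral.integral_congr ?_
        intro s hs
        rw [hu] at hs
        dsimp only
        rw [div_pow, Real.sq_sqrt (hgap s hs), div_eq_mul_inv]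
      have e3 : (∫ s in (0:ℝ)..b, (Real.sqrt (v' s ^ 2 - v s ^ 2) * m s) ^ 2) = N := by
        rw [hN_def]
        refine intervalIntegral.integral_congr ?_
        intro s hs
        rw [hu] at hs
        dsimp only
        rw [mul_pow, Real.sq_sqrt (hg_nn s hs)]
      rw [e1, e2, e3] at h
      exact h
    rcases eq_or_lt_of_le hDnn with hD0 | hDpos
    · rw [← hD0, ENNReal.ofReal_zero, ENNReal.div_zero]
      · exact le_top
      · refine (ENNReal.ofReal_pos.2 (Real.sqrt_pos.2 hNpos)).ne'
    · rw [ENNReal.le_div_iff_mul_le (Or.inl (ENNReal.ofReal_pos.2 hDpos).ne')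
        (Or.inl ENNReal.ofReal_ne_top),
        ← ENNReal.ofReal_mul (by positivity)]
      apply ENNReal.ofReal_le_ofReal
      rw [inv_mul_le_iff₀ (Real.sqrt_pos.2 hIpos)]
      calc D = Real.sqrt (D ^ 2) := (Real.sqrt_sq hDnn).symm
        _ ≤ Real.sqrt (Iinf * N) := Real.sqrt_le_sqrt hCS
        _ = Real.sqrt Iinf * Real.sqrt N := Real.sqrt_mul hIpos.le _
end

section
/- Let θ ∈ (0,π), set α = cos θ and β = sin θ, and define u : [0,∞) → ℝ by u(s) = e^{αs} · sin(βs)/β. Then u(0) = 0 and u''(s) − 2α u'(s) + u(s) = 0 for all s; moreover, for every s with 0 < s < (π−θ)/β one has u(s) > 0 and u'(s)/u(s) = sin(βs + θ)/sin(βs); in particular u'(s)/u(s) > 1 for 0 < s < (π−θ)/(2β), and u'(a*) = u(a*) at a* = (π−θ)/(2β). -/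
open Real

lemma aux_hasDerivAt (a b s : ℝ) :
    HasDerivAt (fun s : ℝ => Real.exp (a*s) * Real.sin (b*s) / b)
      (Real.exp (a*s) * (a * Real.sin (b*s) + b * Real.cos (b*s)) / b) s := by
  have h1 : HasDerivAt (fun x : ℝ => a * x) a s := by
    simpa using (hasDerivAt_id s).const_mul a
  have h2 : HasDerivAt (fun x : ℝ => b * x) b s := by
    simpa using (hasDerivAt_id s).const_mul b
  have := (h1.exp.mul h2.sin).div_const b
  exact this.congr_deriv (by ring)

lemma aux_hasDerivAt₂ (a b s : ℝ) :
    HasDerivAt (fun s : ℝ => Real.exp (a*s) * (a * Real.sin (b*s) + b * Real.cos (b*s)) / b)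
      (Real.exp (a*s) * ((a*a - b*b) * Real.sin (b*s) + 2*a*b * Real.cos (b*s)) / b) s := by
  have h1 : HasDerivAt (fun x : ℝ => a * x) a s := by
    simpa using (hasDerivAt_id s).const_mul a
  have h2 : HasDerivAt (fun x : ℝ => b * x) b s := by
    simpa using (hasDerivAt_id s).const_mul b
  have inner := (h2.sin.const_mul a).add (h2.cos.const_mul b)
  have := (h1.exp.mul inner).div_const b
  exact this.congr_deriv (by simp only [Pi.add_apply]; ring)

theorem stmt_18 (θ : ℝ) (hθ : θ ∈ Set.Ioo 0 π) :
    (fun s : ℝ => Real.exp (Real.cos θ * s) * Real.sin (Real.sin θ * s) / Real.sin θ) 0 = 0 ∧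
    (∀ s : ℝ,
      deriv (deriv (fun s : ℝ =>
          Real.exp (Real.cos θ * s) * Real.sin (Real.sin θ * s) / Real.sin θ)) s -
        2 * Real.cos θ *
          deriv (fun s : ℝ =>
            Real.exp (Real.cos θ * s) * Real.sin (Real.sin θ * s) / Real.sin θ) s +
        (fun s : ℝ =>
          Real.exp (Real.cos θ * s) * Real.sin (Real.sin θ * s) / Real.sin θ) s = 0) ∧
    (∀ s : ℝ, 0 < s → s < (π - θ) / Real.sin θ →
      0 < (fun s : ℝ =>
          Real.exp (Real.cos θ * s) * Real.sin (Real.sin θ * s) / Real.sin θ) s ∧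
      deriv (fun s : ℝ =>
          Real.exp (Real.cos θ * s) * Real.sin (Real.sin θ * s) / Real.sin θ) s /
        (fun s : ℝ =>
          Real.exp (Real.cos θ * s) * Real.sin (Real.sin θ * s) / Real.sin θ) s =
        Real.sin (Real.sin θ * s + θ) / Real.sin (Real.sin θ * s)) ∧
    (∀ s : ℝ, 0 < s → s < (π - θ) / (2 * Real.sin θ) →
      1 < deriv (fun s : ℝ =>
          Real.exp (Real.cos θ * s) * Real.sin (Real.sin θ * s) / Real.sin θ) s /
        (fun s : ℝ =>
          Real.exp (Real.cos θ * s) * Real.sin (Real.sin θ * s) / Real.sin θ) s) ∧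
    deriv (fun s : ℝ =>
        Real.exp (Real.cos θ * s) * Real.sin (Real.sin θ * s) / Real.sin θ)
        ((π - θ) / (2 * Real.sin θ)) =
      (fun s : ℝ =>
        Real.exp (Real.cos θ * s) * Real.sin (Real.sin θ * s) / Real.sin θ)
        ((π - θ) / (2 * Real.sin θ)) := by
  obtain ⟨hθ0, hθπ⟩ := hθ
  have hb : 0 < Real.sin θ := Real.sin_pos_of_pos_of_lt_pi hθ0 hθπ
  set a := Real.cos θ with ha
  set b := Real.sin θ with hbdef
  have hpyth : a^2 + b^2 = 1 := by
    rw [ha, hbdef]; exact Real.cos_sq_add_sin_sq θ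
  have hd : deriv (fun s : ℝ => Real.exp (a*s) * Real.sin (b*s) / b)
      = fun s => Real.exp (a*s) * (a * Real.sin (b*s) + b * Real.cos (b*s)) / b := by
    funext s; exact (aux_hasDerivAt a b s).deriv
  -- the ratio lemma
  have key : ∀ s : ℝ, 0 < s → b * s < π - θ →
      0 < Real.exp (a*s) * Real.sin (b*s) / b ∧
      (Real.exp (a*s) * (a * Real.sin (b*s) + b * Real.cos (b*s)) / b) /
        (Real.exp (a*s) * Real.sin (b*s) / b) =
        Real.sin (b*s + θ) / Real.sin (b*s) := by
    intro s hs0 hs1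
    have hsinpos : 0 < Real.sin (b*s) :=
      Real.sin_pos_of_pos_of_lt_pi (mul_pos hb hs0) (by linarith)
    constructor
    · exact div_pos (mul_pos (Real.exp_pos _) hsinpos) hb
    · rw [Real.sin_add]
      have he := (Real.exp_pos (a*s)).ne'
      field_simp
      ring
  refine ⟨by simp, ?_, ?_, ?_, ?_⟩
  · intro s
    simp only
    rw [hd]
    rw [show deriv (fun s => Real.exp (a*s) * (a * Real.sin (b*s) + b * Real.cos (b*s)) / b) s
        = Real.exp (a*s) * ((a*a - b*b) * Real.sin (b*s) + 2*a*b * Real.cos (b*s)) / b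
      from (aux_hasDerivAt₂ a b s).deriv]
    have hb' := hb.ne'
    field_simp
    linear_combination (-(Real.exp (a*s) * Real.sin (s*b))) * hpyth
  · intro s hs0 hs1
    have hbs : b * s < π - θ := by
      have := (lt_div_iff₀ hb).mp hs1
      linarith [this, mul_comm b s]
    have := key s hs0 hbs
    simp only
    rw [hd]
    exact this
  · intro s hs0 hs1
    have hbs : b * s < (π - θ) / 2 := by
      have := (lt_div_iff₀ (by positivity : (0:ℝ) < 2 * b)).mp hs1
      nlinarith
    have hbs' : b * s < π - θ := by linarith
    obtain ⟨hpos, hratio⟩ := key s hs0 hbs'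
    simp only
    rw [hd]
    rw [hratio]
    have hsinpos : 0 < Real.sin (b*s) :=
      Real.sin_pos_of_pos_of_lt_pi (mul_pos hb hs0) (by linarith)
    rw [lt_div_iff₀ hsinpos, one_mul]
    have hsub : Real.sin (b*s + θ) - Real.sin (b*s)
        = 2 * Real.sin (θ/2) * Real.cos (b*s + θ/2) := by
      rw [Real.sin_sub_sin]; ring_nf
    have h1 : 0 < Real.sin (θ/2) :=
      Real.sin_pos_of_pos_of_lt_pi (by linarith) (by linarith [Real.pi_pos])
    have h2 : 0 < Real.cos (b*s + θ/2) := by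
      apply Real.cos_pos_of_mem_Ioo
      constructor
      · nlinarith [mul_pos hb hs0, Real.pi_pos]
      · nlinarith
    nlinarith [mul_pos (mul_pos (by norm_num : (0:ℝ) < 2) h1) h2]
  · rw [hd]
    show Real.exp (a * ((π - θ) / (2 * b))) *
        (a * Real.sin (b * ((π - θ) / (2 * b))) + b * Real.cos (b * ((π - θ) / (2 * b)))) / b =
      Real.exp (a * ((π - θ) / (2 * b))) * Real.sin (b * ((π - θ) / (2 * b))) / b
    have hx : b * ((π - θ) / (2 * b)) = π/2 - θ/2 := by
      field_simp
    rw [hx]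
    have h1 : Real.sin (π/2 - θ/2) = Real.cos (θ/2) := Real.sin_pi_div_two_sub _
    have h2 : Real.cos (π/2 - θ/2) = Real.sin (θ/2) := Real.cos_pi_div_two_sub _
    rw [h1, h2]
    have h3 : a * Real.cos (θ/2) + b * Real.sin (θ/2) = Real.cos (θ/2) := by
      rw [ha, hbdef]
      have := Real.cos_sub θ (θ/2)
      rw [show θ - θ/2 = θ/2 by ring] at this
      linarith [this]
    rw [h3]
end

section
/- Let r > 0 and t > 0, and define J : ℝ → ℝ by J(α) = t·e^{αt}·(r² − α²). Set α₊ = (√(1 + (rt)²) − 1)/t. Then 0 < α₊ < r, and for every α ∈ ℝ one has J(α) ≤ J(α₊), with J(α₊) = e^{√(1+(rt)²) − 1} · (2/t) · ( √(1+(rt)²) − 1 ). -/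
theorem stmt_19 (r t : ℝ) (hr : 0 < r) (ht : 0 < t) :
    0 < (Real.sqrt (1 + (r * t) ^ 2) - 1) / t ∧
    (Real.sqrt (1 + (r * t) ^ 2) - 1) / t < r ∧
    (∀ α : ℝ, t * Real.exp (α * t) * (r ^ 2 - α ^ 2) ≤
      t * Real.exp (((Real.sqrt (1 + (r * t) ^ 2) - 1) / t) * t) *
        (r ^ 2 - ((Real.sqrt (1 + (r * t) ^ 2) - 1) / t) ^ 2)) ∧
    t * Real.exp (((Real.sqrt (1 + (r * t) ^ 2) - 1) / t) * t) *
        (r ^ 2 - ((Real.sqrt (1 + (r * t) ^ 2) - 1) / t) ^ 2) =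
      Real.exp (Real.sqrt (1 + (r * t) ^ 2) - 1) * (2 / t) *
        (Real.sqrt (1 + (r * t) ^ 2) - 1) := by
  set s := Real.sqrt (1 + (r * t) ^ 2) with hs
  have hs0 : 0 ≤ s := Real.sqrt_nonneg _
  have hs2 : s ^ 2 = 1 + (r * t) ^ 2 := Real.sq_sqrt (by positivity)
  have hs1 : 1 < s := by nlinarith [mul_pos hr ht]
  set a := (s - 1) / t with ha
  have ha0 : 0 < a := div_pos (by linarith) ht
  have hat : a * t = s - 1 := div_mul_cancel₀ _ ht.ne'
  have hkey : r ^ 2 - a ^ 2 = 2 * a / t := by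
    have : a ^ 2 * t ^ 2 = (s - 1) ^ 2 := by
      rw [← mul_pow, hat]
    field_simp
    nlinarith [this]
  refine ⟨ha0, ?_, ?_, ?_⟩
  · -- a < r
    rw [div_lt_iff₀ ht]
    nlinarith [mul_pos hr ht]
  · intro α
    have hle : (a - α) * t + 1 ≤ Real.exp ((a - α) * t) := Real.add_one_le_exp _
    have hpos : 0 < Real.exp (α * t) := Real.exp_pos _
    have hsplit : Real.exp (a * t) = Real.exp (α * t) * Real.exp ((a - α) * t) := by
      rw [← Real.exp_add]; ring_nf
    rw [hsplit, hkey]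
    have h1 : r ^ 2 - α ^ 2 ≤ Real.exp ((a - α) * t) * (2 * a / t) := by
      have h2 : r ^ 2 - α ^ 2 ≤ ((a - α) * t + 1) * (2 * a / t) := by
        have : r ^ 2 = a ^ 2 + 2 * a / t := by linarith [hkey]
        rw [this]
        have h2a : 0 < 2 * a / t := by positivity
        have expand : ((a - α) * t + 1) * (2 * a / t) = (a-α)*(2*a) + 2*a/t := by
          field_simp
        rw [expand]
        nlinarith [sq_nonneg (a - α)]
      calc r ^ 2 - α ^ 2 ≤ ((a - α) * t + 1) * (2 * a / t) := h2
        _ ≤ Real.exp ((a - α) * t) * (2 * a / t) := by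
            apply mul_le_mul_of_nonneg_right hle (by positivity)
    calc t * Real.exp (α * t) * (r ^ 2 - α ^ 2)
        ≤ t * Real.exp (α * t) * (Real.exp ((a - α) * t) * (2 * a / t)) := by
          apply mul_le_mul_of_nonneg_left h1 (by positivity)
      _ = t * (Real.exp (α * t) * Real.exp ((a - α) * t)) * (2 * a / t) := by ring
  · rw [hat, hkey, ha]
    field_simp
end
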